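/- arXiv:1011.2470 — 10 statements merged into one kernel-verified Lean document; each statement's English description precedes it below -/
import Mathlib

section
/- The Dirichlet convolution (ψ_{a,b} * μ)(n) equals μ(n)·∏_{p | gcd(a,n), p∤b} (-1/(p-2)) if n divides ab and (n is odd or b is even), and equals 0 otherwise. -/
open Finset

noncomputable def phiCirc (n : ℕ) : ℝ :=
  ∏ p ∈ n.primeFactors.erase 2, (1 - 1 / ((p : ℝ) - 1))

noncomputable def psiab (a b n : ℕ) : ℝ :=
  if Nat.gcd n b = 1 then (phiCirc (Nat.gcd a n))⁻¹ else 0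

/-- Dirichlet convolution of `ψ_{a,b}` with the Möbius function. -/
noncomputable def psiMu (a b n : ℕ) : ℝ :=
  ∑ d ∈ n.divisors, psiab a b (n / d) * (ArithmeticFunction.moebius d : ℝ)

namespace StmtAux
open ArithmeticFunction

lemma psiab_one (a b : ℕ) : psiab a b 1 = 1 := by
  simp [psiab, phiCirc]

lemma phiCirc_mul {m n : ℕ} (hm : m ≠ 0) (hn : n ≠ 0) (h : Nat.Coprime m n) :
    phiCirc (m * n) = phiCirc m * phiCirc n := by
  unfold phiCirc
  rw [Nat.primeFactors_mul hm hn, Finset.erase_union_distrib, Finset.prod_union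
    (h.disjoint_primeFactors.mono (Finset.erase_subset _ _) (Finset.erase_subset _ _))]

lemma psiab_mul {a b m n : ℕ} (ha : a ≠ 0) (h : Nat.Coprime m n) :
    psiab a b (m * n) = psiab a b m * psiab a b n := by
  unfold psiab
  have hg : Nat.gcd a (m * n) = Nat.gcd a m * Nat.gcd a n := Nat.Coprime.gcd_mul a h
  have hco : (Nat.gcd (m * n) b = 1) ↔ (Nat.gcd m b = 1 ∧ Nat.gcd n b = 1) :=
    Nat.coprime_mul_iff_left
  by_cases h1 : Nat.gcd m b = 1 <;> by_cases h2 : Nat.gcd n b = 1 <;>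
    simp [hco, h1, h2]
  rw [hg, phiCirc_mul (Nat.gcd_ne_zero_left ha) (Nat.gcd_ne_zero_left ha)
    (Nat.Coprime.coprime_dvd_left (Nat.gcd_dvd_right a m)
      (Nat.Coprime.coprime_dvd_right (Nat.gcd_dvd_right a n) h)), mul_inv]

noncomputable def Psi (a b : ℕ) : ArithmeticFunction ℝ :=
  ⟨fun n => if n = 0 then 0 else psiab a b n, by simp⟩

lemma Psi_apply {a b n : ℕ} (hn : n ≠ 0) : Psi a b n = psiab a b n := by
  simp [Psi, hn]

noncomputable def Rhs (a b : ℕ) : ArithmeticFunction ℝ :=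
  ⟨fun n => if n ∣ a * b ∧ (Odd n ∨ Even b) ∧ n ≠ 0 then
      (moebius n : ℝ) * ∏ p ∈ (Nat.gcd a n).primeFactors \ b.primeFactors, (-1 / ((p : ℝ) - 2))
    else 0, by simp⟩

lemma Rhs_apply (a b n : ℕ) : Rhs a b n =
    if n ∣ a * b ∧ (Odd n ∨ Even b) ∧ n ≠ 0 then
      (moebius n : ℝ) * ∏ p ∈ (Nat.gcd a n).primeFactors \ b.primeFactors, (-1 / ((p : ℝ) - 2))
    else 0 := rfl

lemma Psi_mult {a b : ℕ} (ha : a ≠ 0) : (Psi a b).IsMultiplicative := by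
  rw [IsMultiplicative.iff_ne_zero]
  refine ⟨by simp [Psi_apply, psiab_one], fun {m n} hm hn h => ?_⟩
  rw [Psi_apply (mul_ne_zero hm hn), Psi_apply hm, Psi_apply hn, psiab_mul ha h]

lemma Rhs_mult {a b : ℕ} (ha : a ≠ 0) : (Rhs a b).IsMultiplicative := by
  rw [IsMultiplicative.iff_ne_zero]
  constructor
  · simp [Rhs_apply, Nat.one_dvd]
  intro m n hm hn h
  simp only [Rhs_apply]
  have hdvd : m * n ∣ a * b ↔ (m ∣ a * b ∧ n ∣ a * b) :=
    ⟨fun hd => ⟨(dvd_mul_right m n).trans hd, (dvd_mul_left n m).trans hd⟩,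
     fun ⟨h1, h2⟩ => h.mul_dvd_of_dvd_of_dvd h1 h2⟩
  have hodd : (Odd (m * n) ∨ Even b) ↔ ((Odd m ∨ Even b) ∧ (Odd n ∨ Even b)) := by
    rw [Nat.odd_mul]; tauto
  by_cases hc : (m ∣ a * b ∧ (Odd m ∨ Even b) ∧ m ≠ 0) ∧ (n ∣ a * b ∧ (Odd n ∨ Even b) ∧ n ≠ 0)
  · rw [if_pos hc.1, if_pos hc.2, if_pos ⟨hdvd.mpr ⟨hc.1.1, hc.2.1⟩,
      hodd.mpr ⟨hc.1.2.1, hc.2.2.1⟩, mul_ne_zero hm hn⟩]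
    have hmu : (moebius (m * n) : ℝ) = (moebius m : ℝ) * (moebius n : ℝ) := by
      rw [isMultiplicative_moebius.map_mul_of_coprime h]; push_cast; ring
    have hgcop : Nat.Coprime (Nat.gcd a m) (Nat.gcd a n) :=
      Nat.Coprime.coprime_dvd_left (Nat.gcd_dvd_right a m)
        (Nat.Coprime.coprime_dvd_right (Nat.gcd_dvd_right a n) h)
    have hpf : (Nat.gcd a (m * n)).primeFactors =
        (Nat.gcd a m).primeFactors ∪ (Nat.gcd a n).primeFactors := by
      rw [Nat.Coprime.gcd_mul a h,
        Nat.primeFactors_mul (Nat.gcd_ne_zero_left ha) (Nat.gcd_ne_zero_left ha)]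
    rw [hpf, Finset.union_sdiff_distrib, Finset.prod_union
      (hgcop.disjoint_primeFactors.mono Finset.sdiff_subset Finset.sdiff_subset), hmu]
    ring
  · rw [if_neg ?_]
    · rcases Decidable.not_and_iff_or_not.mp hc with hx | hx
      · rw [if_neg hx]; ring_nf
      · rw [if_neg hx]; ring_nf
    · rintro ⟨h1, h2, -⟩
      exact hc ⟨⟨(hdvd.mp h1).1, (hodd.mp h2).1, hm⟩, ⟨(hdvd.mp h1).2, (hodd.mp h2).2, hn⟩⟩

lemma gcd_pow_primeFactors {a p k : ℕ} (ha : a ≠ 0) (hp : p.Prime) (hk : k ≠ 0) :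
    (Nat.gcd a (p ^ k)).primeFactors = if p ∣ a then {p} else ∅ := by
  ext q
  rw [Nat.mem_primeFactors]
  constructor
  · rintro ⟨hq, hd, -⟩
    rw [Nat.dvd_gcd_iff] at hd
    have : q = p := (Nat.prime_dvd_prime_iff_eq hq hp).mp (hq.dvd_of_dvd_pow hd.2)
    subst this
    simp [hd.1]
  · intro hq
    by_cases hpa : p ∣ a
    · simp only [if_pos hpa, Finset.mem_singleton] at hq
      subst hq
      exact ⟨hp, Nat.dvd_gcd hpa (dvd_pow_self _ hk), Nat.gcd_ne_zero_left ha⟩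
    · simp [hpa] at hq

lemma phiCirc_gcd_pow {a p k : ℕ} (ha : a ≠ 0) (hp : p.Prime) (hk : k ≠ 0) :
    phiCirc (Nat.gcd a (p ^ k)) =
      if p ∣ a ∧ p ≠ 2 then 1 - 1 / ((p : ℝ) - 1) else 1 := by
  unfold phiCirc
  rw [gcd_pow_primeFactors ha hp hk]
  by_cases hpa : p ∣ a
  · by_cases hp2 : p = 2
    · subst hp2; simp [hpa]
    · rw [if_pos hpa, if_pos ⟨hpa, hp2⟩,
        Finset.erase_eq_of_notMem (by simp [Ne.symm hp2]), Finset.prod_singleton]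
  · simp [hpa]

lemma psiab_pow {a b p k : ℕ} (ha : a ≠ 0) (hp : p.Prime) (hk : k ≠ 0) :
    psiab a b (p ^ k) =
      if p ∣ b then 0
      else if p ∣ a ∧ p ≠ 2 then (1 - 1 / ((p : ℝ) - 1))⁻¹ else 1 := by
  unfold psiab
  have hcop : Nat.gcd (p ^ k) b = 1 ↔ ¬ p ∣ b := by
    rw [show (Nat.gcd (p ^ k) b = 1) = Nat.Coprime (p ^ k) b from rfl,
      Nat.coprime_pow_left_iff (Nat.pos_of_ne_zero hk), hp.coprime_iff_not_dvd]
  by_cases hpb : p ∣ b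
  · rw [if_neg (by rw [hcop]; exact not_not_intro hpb), if_pos hpb]
  · rw [if_pos (hcop.mpr hpb), if_neg hpb, phiCirc_gcd_pow ha hp hk]
    by_cases hc : p ∣ a ∧ p ≠ 2 <;> simp [hc]

lemma conv_pow {a b p e : ℕ} (hp : p.Prime) (he : e ≠ 0) :
    (Psi a b * ((moebius : ArithmeticFunction ℤ) : ArithmeticFunction ℝ)) (p ^ e)
      = Psi a b (p ^ e) - Psi a b (p ^ (e - 1)) := by
  rw [mul_apply, Nat.sum_divisorsAntidiagonal'
    (f := fun i j => Psi a b i * ((moebius : ArithmeticFunction ℤ) : ArithmeticFunction ℝ) j),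
    Nat.sum_divisors_prime_pow hp]
  have key : ∀ x ∈ range (e + 1),
      Psi a b (p ^ e / p ^ x) * ((moebius : ArithmeticFunction ℤ) : ArithmeticFunction ℝ) (p ^ x)
        = (if x = 0 then Psi a b (p ^ e) else 0)
          + (if x = 1 then -(Psi a b (p ^ (e - 1))) else 0) := by
    intro x hx
    rw [mem_range, Nat.lt_succ_iff] at hx
    rw [Nat.pow_div hx hp.pos, intCoe_apply]
    match x with
    | 0 => simp
    | 1 =>
      rw [pow_one, moebius_apply_prime hp]
      norm_num
    | (x + 2) =>
      rw [moebius_apply_prime_pow hp (by omega), if_neg (by omega), if_neg (by omega),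
        if_neg (by omega)]
      norm_num
  rw [Finset.sum_congr rfl key, Finset.sum_add_distrib,
    Finset.sum_ite_eq' (range (e + 1)) 0, Finset.sum_ite_eq' (range (e + 1)) 1,
    if_pos (by simp), if_pos (by rw [mem_range]; omega)]
  ring

lemma prod_pow {a b p e : ℕ} (ha : a ≠ 0) (hb : b ≠ 0) (hp : p.Prime) (he : e ≠ 0) :
    (∏ q ∈ (Nat.gcd a (p ^ e)).primeFactors \ b.primeFactors, (-1 / ((q : ℝ) - 2)))
      = if p ∣ a ∧ ¬ p ∣ b then -1 / ((p : ℝ) - 2) else 1 := by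
  rw [gcd_pow_primeFactors ha hp he]
  by_cases hpa : p ∣ a
  · by_cases hpb : p ∣ b
    · rw [if_pos hpa, if_neg (by tauto),
        Finset.sdiff_eq_empty_iff_subset.mpr
          (Finset.singleton_subset_iff.mpr (Nat.mem_primeFactors.mpr ⟨hp, hpb, hb⟩)),
        Finset.prod_empty]
    · rw [if_pos hpa, if_pos ⟨hpa, hpb⟩,
        Finset.sdiff_eq_self_of_disjoint (Finset.disjoint_singleton_left.mpr
          (fun hmem => hpb (Nat.dvd_of_mem_primeFactors hmem))),
        Finset.prod_singleton]
  · rw [if_neg hpa, if_neg (by tauto)]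
    simp

lemma prime_pow_eq {a b : ℕ} (ha : a ≠ 0) (hb : b ≠ 0) (p e : ℕ) (hp : p.Prime) :
    (Psi a b * ((moebius : ArithmeticFunction ℤ) : ArithmeticFunction ℝ)) (p ^ e)
      = Rhs a b (p ^ e) := by
  rcases Nat.eq_zero_or_pos e with rfl | hepos
  · rw [pow_zero, ((Psi_mult ha).mul isMultiplicative_moebius.intCast).map_one, Rhs_apply,
      if_pos ⟨one_dvd _, Or.inl odd_one, one_ne_zero⟩]
    simp
  have he : e ≠ 0 := hepos.ne'
  rw [conv_pow hp he, Rhs_apply]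
  have hpe0 : (p : ℕ) ^ e ≠ 0 := pow_ne_zero _ hp.ne_zero
  have hΨe : Psi a b (p ^ e) = psiab a b (p ^ e) := Psi_apply hpe0
  by_cases hpb : p ∣ b
  · -- p divides b
    have hΨ : ∀ k, k ≠ 0 → Psi a b (p ^ k) = 0 := fun k hk => by
      rw [Psi_apply (pow_ne_zero _ hp.ne_zero), psiab_pow ha hp hk, if_pos hpb]
    have hoe : Odd (p ^ e) ∨ Even b := by
      by_cases hp2 : p = 2
      · exact Or.inr ((even_iff_two_dvd).mpr (hp2 ▸ hpb))
      · exact Or.inl ((hp.odd_of_ne_two hp2).pow)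
    rcases eq_or_ne e 1 with rfl | he1
    · have h0 : Psi a b (p ^ (1 - 1)) = 1 := by
        rw [show (1 : ℕ) - 1 = 0 from rfl, pow_zero, Psi_apply one_ne_zero, psiab_one]
      rw [hΨ 1 one_ne_zero, h0, prod_pow ha hb hp one_ne_zero,
        if_neg (show ¬(p ∣ a ∧ ¬ p ∣ b) from fun hx => hx.2 hpb),
        if_pos ⟨by simpa using Dvd.dvd.mul_left hpb a, hoe, hpe0⟩, pow_one,
        moebius_apply_prime hp]
      norm_num
    · rw [hΨ e he, hΨ (e - 1) (by omega), sub_zero]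
      by_cases hcond : p ^ e ∣ a * b ∧ (Odd (p ^ e) ∨ Even b) ∧ p ^ e ≠ 0
      · rw [if_pos hcond, moebius_apply_prime_pow hp he, if_neg he1]
        norm_num
      · rw [if_neg hcond]
  · -- p does not divide b
    by_cases hpa : p ∣ a
    · by_cases hp2 : p = 2
      · -- p = 2, b odd: both sides vanish
        subst hp2
        have hΨ : ∀ k, Psi a b (2 ^ k) = 1 := fun k => by
          rcases eq_or_ne k 0 with rfl | hk
          · rw [pow_zero, Psi_apply one_ne_zero, psiab_one]
          · rw [Psi_apply (pow_ne_zero _ two_ne_zero), psiab_pow ha hp hk, if_neg hpb,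
              if_neg (by tauto)]
        rw [hΨ e, hΨ (e - 1), sub_self, if_neg]
        rintro ⟨-, hoe, -⟩
        rcases hoe with hoe | hoe
        · exact (Nat.not_odd_iff_even.mpr (Nat.even_pow.mpr ⟨even_iff_two_dvd.mpr dvd_rfl, he⟩)) hoe
        · exact hpb (even_iff_two_dvd.mp hoe)
      · -- p odd, p ∣ a, p ∤ b
        have hΨ : ∀ k, k ≠ 0 → Psi a b (p ^ k) = (1 - 1 / ((p : ℝ) - 1))⁻¹ := fun k hk => by
          rw [Psi_apply (pow_ne_zero _ hp.ne_zero), psiab_pow ha hp hk, if_neg hpb,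
            if_pos ⟨hpa, hp2⟩]
        have hp3 : 3 ≤ p := by
          have := hp.two_le
          omega
        have h3R : (3 : ℝ) ≤ (p : ℝ) := by exact_mod_cast hp3
        have h1 : (p : ℝ) - 1 ≠ 0 := by linarith
        have h2 : (p : ℝ) - 2 ≠ 0 := by linarith
        rcases eq_or_ne e 1 with rfl | he1
        · have h0 : Psi a b (p ^ (1 - 1)) = 1 := by
            rw [show (1 : ℕ) - 1 = 0 from rfl, pow_zero, Psi_apply one_ne_zero, psiab_one]
          rw [hΨ 1 one_ne_zero, h0, prod_pow ha hb hp one_ne_zero,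
            if_pos (show p ∣ a ∧ ¬ p ∣ b from ⟨hpa, hpb⟩),
            if_pos ⟨by simpa using dvd_mul_of_dvd_left hpa b,
              Or.inl (by simpa using hp.odd_of_ne_two hp2), hpe0⟩, pow_one,
            moebius_apply_prime hp]
          have hc : 1 - 1 / ((p : ℝ) - 1) = ((p : ℝ) - 2) / ((p : ℝ) - 1) := by
            field_simp; ring
          rw [hc, inv_div]
          push_cast
          field_simp
          ring
        · rw [hΨ e he, hΨ (e - 1) (by omega), sub_self]
          by_cases hcond : p ^ e ∣ a * b ∧ (Odd (p ^ e) ∨ Even b) ∧ p ^ e ≠ 0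
          · rw [if_pos hcond, moebius_apply_prime_pow hp he, if_neg he1]
            norm_num
          · rw [if_neg hcond]
    · -- p divides neither a nor b
      have hΨ : ∀ k, Psi a b (p ^ k) = 1 := fun k => by
        rcases eq_or_ne k 0 with rfl | hk
        · rw [pow_zero, Psi_apply one_ne_zero, psiab_one]
        · rw [Psi_apply (pow_ne_zero _ hp.ne_zero), psiab_pow ha hp hk, if_neg hpb,
            if_neg (by tauto)]
      rw [hΨ e, hΨ (e - 1), sub_self, if_neg]
      rintro ⟨hd, -, -⟩
      have : p ∣ a * b := dvd_trans (dvd_pow_self p he) hd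
      rcases (Nat.Prime.dvd_mul hp).mp this with h | h
      · exact hpa h
      · exact hpb h

lemma main_eq {a b : ℕ} (ha : a ≠ 0) (hb : b ≠ 0) :
    Psi a b * ((moebius : ArithmeticFunction ℤ) : ArithmeticFunction ℝ) = Rhs a b :=
  (ArithmeticFunction.IsMultiplicative.eq_iff_eq_on_prime_powers _
    ((Psi_mult ha).mul isMultiplicative_moebius.intCast)
    (Rhs a b) (Rhs_mult ha)).mpr (fun p i hp => prime_pow_eq ha hb p i hp)

lemma stmt_aux (a b n : ℕ) (ha : 0 < a) (hb : 0 < b) (hn : 0 < n) :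
    psiMu a b n =
      if n ∣ a * b ∧ (Odd n ∨ Even b) then
        (ArithmeticFunction.moebius n : ℝ) *
          ∏ p ∈ (Nat.gcd a n).primeFactors \ b.primeFactors, (-1 / ((p : ℝ) - 2))
      else 0 := by
  have h1 : psiMu a b n
      = (Psi a b * ((moebius : ArithmeticFunction ℤ) : ArithmeticFunction ℝ)) n := by
    rw [mul_apply, Nat.sum_divisorsAntidiagonal'
      (f := fun i j => Psi a b i * ((moebius : ArithmeticFunction ℤ) : ArithmeticFunction ℝ) j)]
    unfold psiMu
    refine Finset.sum_congr rfl (fun d hd => ?_)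
    rw [Nat.mem_divisors] at hd
    have hd0 : d ≠ 0 := fun h => hn.ne' (Nat.eq_zero_of_zero_dvd (h ▸ hd.1))
    have hnd : n / d ≠ 0 :=
      Nat.div_ne_zero_iff_of_dvd hd.1 |>.mpr ⟨hn.ne', hd0⟩
    rw [Psi_apply hnd, intCoe_apply]
  rw [h1, main_eq ha.ne' hb.ne', Rhs_apply]
  by_cases hc : n ∣ a * b ∧ (Odd n ∨ Even b)
  · rw [if_pos ⟨hc.1, hc.2, hn.ne'⟩, if_pos hc]
  · rw [if_neg (by tauto), if_neg hc]

end StmtAux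

theorem stmt_1 (a b n : ℕ) (ha : 0 < a) (hb : 0 < b) (hn : 0 < n) :
    psiMu a b n =
      if n ∣ a * b ∧ (Odd n ∨ Even b) then
        (ArithmeticFunction.moebius n : ℝ) *
          ∏ p ∈ (Nat.gcd a n).primeFactors \ b.primeFactors, (-1 / ((p : ℝ) - 2))
      else 0 := by
  exact StmtAux.stmt_aux a b n ha hb hn
end

section
/- For any positive integers a, b, the sum ∑_{d=1}^{∞} (ψ_{a,b} * μ)(d)/d equals ∏_{p|b}(1 - 1/p) · ∏_{p|a, p∤b, p≠2}(1 + 1/(p(p-2))). -/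
open Finset

open ArithmeticFunction
open scoped ArithmeticFunction.Moebius ArithmeticFunction.zeta

lemma phiCirc_congr {m n : ℕ} (h : m.primeFactors = n.primeFactors) :
    phiCirc m = phiCirc n := by
  unfold phiCirc; rw [h]

lemma phiCirc_one : phiCirc 1 = 1 := by simp [phiCirc]

lemma phiCirc_two : phiCirc 2 = 1 := by
  simp [phiCirc, Nat.Prime.primeFactors Nat.prime_two]

lemma phiCirc_prime {p : ℕ} (hp : p.Prime) (h2 : p ≠ 2) :
    phiCirc p = 1 - 1 / ((p : ℝ) - 1) := by
  rw [phiCirc, hp.primeFactors, Finset.erase_eq_of_notMem (by simp [Ne.symm h2]),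
    Finset.prod_singleton]

lemma phiCirc_mul {u v : ℕ} (hu : u ≠ 0) (hv : v ≠ 0) (h : Nat.Coprime u v) :
    phiCirc (u * v) = phiCirc u * phiCirc v := by
  unfold phiCirc
  rw [Nat.primeFactors_mul hu hv, Finset.erase_union_distrib,
    Finset.prod_union (h.disjoint_primeFactors.mono (Finset.erase_subset _ _)
      (Finset.erase_subset _ _))]

lemma psiab_one (a b : ℕ) : psiab a b 1 = 1 := by
  simp [psiab, Nat.gcd_one_left, Nat.gcd_one_right, phiCirc_one]

lemma psiab_mul {a b m n : ℕ} (ha : 0 < a) (hm : m ≠ 0) (hn : n ≠ 0)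
    (h : m.Coprime n) : psiab a b (m * n) = psiab a b m * psiab a b n := by
  unfold psiab
  have hcond : Nat.gcd (m * n) b = 1 ↔ Nat.gcd m b = 1 ∧ Nat.gcd n b = 1 :=
    Nat.coprime_mul_iff_left
  have hgcd : Nat.gcd a (m * n) = Nat.gcd a m * Nat.gcd a n := Nat.Coprime.gcd_mul a h
  by_cases h1 : Nat.gcd m b = 1 <;> by_cases h2 : Nat.gcd n b = 1 <;>
    simp only [hcond, h1, h2, and_true, true_and, and_false, false_and, if_true, if_false,
      if_pos, if_neg, mul_zero, zero_mul, ite_true, ite_false]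
  · rw [hgcd, phiCirc_mul (Nat.gcd_ne_zero_left ha.ne') (Nat.gcd_ne_zero_left ha.ne')
      ((h.coprime_dvd_left (Nat.gcd_dvd_right a m)).coprime_dvd_right (Nat.gcd_dvd_right a n)),
      mul_inv]

noncomputable def psiF (a b : ℕ) : ArithmeticFunction ℝ :=
  ⟨fun n => if n = 0 then 0 else psiab a b n, by simp⟩

lemma psiF_apply {a b n : ℕ} (hn : n ≠ 0) : psiF a b n = psiab a b n := if_neg hn

lemma psiF_mult {a : ℕ} (b : ℕ) (ha : 0 < a) : (psiF a b).IsMultiplicative := by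
  refine ⟨by rw [psiF_apply one_ne_zero, psiab_one], fun {m n} h => ?_⟩
  rcases eq_or_ne m 0 with rfl | hm
  · have hn : n = 1 := by simpa [Nat.coprime_zero_left] using h
    subst hn; simp [psiF]
  rcases eq_or_ne n 0 with rfl | hn
  · have hm1 : m = 1 := by simpa [Nat.coprime_zero_right] using h
    subst hm1; simp [psiF]
  rw [psiF_apply (mul_ne_zero hm hn), psiF_apply hm, psiF_apply hn, psiab_mul ha hm hn h]

lemma psiab_prime_pow {a b p j : ℕ} (ha : 0 < a) (hp : p.Prime) (hj : j ≠ 0) :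
    psiab a b (p ^ j) = psiab a b p := by
  unfold psiab
  have hdvd : ∀ q : ℕ, q.Prime → (q ∣ p ^ j ↔ q ∣ p) := fun q hq =>
    ⟨hq.dvd_of_dvd_pow, fun h => h.trans (dvd_pow_self p hj)⟩
  have hcond : Nat.gcd (p ^ j) b = 1 ↔ Nat.gcd p b = 1 :=
    Nat.coprime_pow_left_iff (Nat.pos_of_ne_zero hj) p b
  have hphi : phiCirc (Nat.gcd a (p ^ j)) = phiCirc (Nat.gcd a p) := by
    apply phiCirc_congr
    ext q
    simp only [Nat.mem_primeFactors]
    constructor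
    · rintro ⟨hq, hdq, -⟩
      exact ⟨hq, Nat.dvd_gcd (hdq.trans (Nat.gcd_dvd_left _ _))
        ((hdvd q hq).mp (hdq.trans (Nat.gcd_dvd_right _ _))), Nat.gcd_ne_zero_left ha.ne'⟩
    · rintro ⟨hq, hdq, -⟩
      exact ⟨hq, Nat.dvd_gcd (hdq.trans (Nat.gcd_dvd_left _ _))
        ((hdvd q hq).mpr (hdq.trans (Nat.gcd_dvd_right _ _))), Nat.gcd_ne_zero_left ha.ne'⟩
  by_cases hc : Nat.gcd p b = 1
  · rw [if_pos (hcond.mpr hc), if_pos hc, hphi]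
  · rw [if_neg (fun h => hc (hcond.mp h)), if_neg hc]

lemma psiab_prime_not_dvd {a b p : ℕ} (hp : p.Prime) (hpa : ¬ p ∣ a) (hpb : ¬ p ∣ b) :
    psiab a b p = 1 := by
  have h1 : Nat.gcd p b = 1 := (hp.coprime_iff_not_dvd).mpr hpb
  have h2 : Nat.gcd a p = 1 := Nat.Coprime.gcd_eq_one
    (Nat.coprime_comm.mp ((hp.coprime_iff_not_dvd).mpr hpa))
  rw [psiab, if_pos h1, h2, phiCirc_one, inv_one]

lemma psiab_prime_dvd_b {a b p : ℕ} (hp : p.Prime) (hpb : p ∣ b) :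
    psiab a b p = 0 := by
  rw [psiab, if_neg]
  rw [Nat.gcd_eq_left hpb]
  exact hp.ne_one

lemma psiab_prime_dvd_a {a b p : ℕ} (hp : p.Prime) (hpa : p ∣ a) (hpb : ¬ p ∣ b) :
    psiab a b p = (phiCirc p)⁻¹ := by
  rw [psiab, if_pos ((hp.coprime_iff_not_dvd).mpr hpb), Nat.gcd_eq_right hpa]

lemma psiMu_eq (a b n : ℕ) : psiMu a b n = (psiF a b * (μ : ArithmeticFunction ℤ)) n := by
  rcases eq_or_ne n 0 with rfl | hn
  · simp [psiMu]
  rw [mul_apply,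
    Nat.sum_divisorsAntidiagonal' (f := fun x y => psiF a b x * (μ : ArithmeticFunction ℝ) y),
    psiMu]
  refine Finset.sum_congr rfl fun d hd => ?_
  rcases Nat.mem_divisors.mp hd with ⟨hdvd, -⟩
  have hd0 : d ≠ 0 := by rintro rfl; exact hn (Nat.eq_zero_of_zero_dvd hdvd)
  have hd' : n / d ≠ 0 :=
    (Nat.div_pos (Nat.le_of_dvd (Nat.pos_of_ne_zero hn) hdvd) (Nat.pos_of_ne_zero hd0)).ne'
  rw [psiF_apply hd', intCoe_apply]

lemma G_apply_prime {a b p : ℕ} (hp : p.Prime) :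
    (psiF a b * (μ : ArithmeticFunction ℤ)) p = psiab a b p - 1 := by
  rw [mul_apply,
    Nat.sum_divisorsAntidiagonal' (f := fun x y => psiF a b x * (μ : ArithmeticFunction ℝ) y),
    hp.divisors, Finset.sum_pair hp.one_lt.ne]
  rw [Nat.div_one, Nat.div_self hp.pos, psiF_apply hp.pos.ne', psiF_apply one_ne_zero, psiab_one,
    intCoe_apply, intCoe_apply, moebius_apply_one, moebius_apply_prime hp]
  push_cast
  ring

lemma G_apply_prime_pow {a b p k : ℕ} (ha : 0 < a) (hp : p.Prime) (hk : 2 ≤ k) :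
    (psiF a b * (μ : ArithmeticFunction ℤ)) (p ^ k) = 0 := by
  rw [mul_apply,
    Nat.sum_divisorsAntidiagonal' (f := fun x y => psiF a b x * (μ : ArithmeticFunction ℝ) y),
    Nat.sum_divisors_prime_pow hp]
  rw [← Finset.sum_subset (Finset.range_subset_range.mpr (by omega : 2 ≤ k + 1))
    (fun i _ hi => ?_)]
  · rw [Finset.sum_range_succ, Finset.sum_range_one]
    have h1 : p ^ k / p ^ 0 = p ^ k := by simp
    have h2 : p ^ k / p ^ 1 = p ^ (k - 1) := by
      rw [pow_one, ← Nat.pow_div (by omega) hp.pos, pow_one]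
    rw [h1, h2, psiF_apply (pow_ne_zero _ hp.pos.ne'), psiF_apply (pow_ne_zero _ hp.pos.ne'),
      psiab_prime_pow ha hp (by omega), psiab_prime_pow ha hp (by omega),
      pow_zero, pow_one, intCoe_apply, intCoe_apply, moebius_apply_one,
      moebius_apply_prime hp]
    push_cast
    ring
  · have hi2 : 2 ≤ i := by simp only [Finset.mem_range] at hi ⊢; omega
    rw [intCoe_apply, moebius_apply_prime_pow hp (by omega : i ≠ 0), if_neg (by omega : ¬ i = 1)]
    push_cast
    ring

lemma squarefree_prod_primes {s : Finset ℕ} (hs : ∀ p ∈ s, p.Prime) :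
    Squarefree (∏ p ∈ s, p) := by
  induction s using Finset.induction_on with
  | empty => simpa using squarefree_one
  | @insert p s hps ih =>
    rw [Finset.prod_insert hps]
    have hp := hs p (Finset.mem_insert_self p s)
    have hcop : Nat.Coprime p (∏ q ∈ s, q) := Nat.Coprime.prod_right fun q hq =>
      (Nat.coprime_primes hp (hs q (Finset.mem_insert_of_mem hq))).mpr
        (by rintro rfl; exact hps hq)
    exact (Nat.squarefree_mul hcop).mpr
      ⟨hp.prime.squarefree, ih fun q hq => hs q (Finset.mem_insert_of_mem hq)⟩

noncomputable def invId : ArithmeticFunction ℝ := ⟨fun n => (n : ℝ)⁻¹, by simp⟩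

lemma invId_apply {n : ℕ} : invId n = (n : ℝ)⁻¹ := rfl

lemma invId_mult : invId.IsMultiplicative := by
  refine ⟨by simp [invId_apply], fun {m n} _ => ?_⟩
  simp only [invId_apply]
  push_cast
  rw [mul_inv]

theorem stmt_2 (a b : ℕ) (ha : 0 < a) (hb : 0 < b) :
    ∑' d : ℕ, psiMu a b d / (d : ℝ) =
      (∏ p ∈ b.primeFactors, (1 - 1 / (p : ℝ))) *
        ∏ p ∈ (a.primeFactors \ b.primeFactors).erase 2,
          (1 + 1 / ((p : ℝ) * ((p : ℝ) - 2))) := by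
  have hab : a * b ≠ 0 := by positivity
  have hSp : ∀ p ∈ (a * b).primeFactors, p.Prime := fun p hp => Nat.prime_of_mem_primeFactors hp
  set N := ∏ p ∈ (a * b).primeFactors, p with hN
  have hNsq : Squarefree N := squarefree_prod_primes hSp
  have hN0 : N ≠ 0 := hNsq.ne_zero
  have hNpf : N.primeFactors = (a * b).primeFactors := Nat.primeFactors_prod hSp
  have hG : (psiF a b * (μ : ArithmeticFunction ℤ)).IsMultiplicative :=
    (psiF_mult b ha).mul (isMultiplicative_moebius.intCast)
  have hH : ((psiF a b * (μ : ArithmeticFunction ℤ)).pmul invId).IsMultiplicative :=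
    hG.pmul invId_mult
  have hvanish : ∀ d : ℕ, d ∉ N.divisors → psiMu a b d / (d : ℝ) = 0 := by
    intro d hd
    rcases eq_or_ne d 0 with rfl | hd0
    · simp [psiMu]
    have hnd : ¬ d ∣ N := fun h => hd (Nat.mem_divisors.mpr ⟨h, hN0⟩)
    suffices h : (psiF a b * (μ : ArithmeticFunction ℤ)) d = 0 by
      rw [psiMu_eq, h, zero_div]
    by_contra hGd
    have hfact := hG.multiplicative_factorization _ hd0
    rw [Finsupp.prod] at hfact
    have hterm : ∀ p ∈ d.factorization.support,
        (psiF a b * (μ : ArithmeticFunction ℤ)) (p ^ d.factorization p) ≠ 0 := by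
      rw [hfact] at hGd
      exact fun p hp h0 => hGd (Finset.prod_eq_zero hp h0)
    have hkey : ∀ p ∈ d.primeFactors, d.factorization p = 1 ∧ p ∈ (a * b).primeFactors := by
      intro p hp
      have hpp : p.Prime := Nat.prime_of_mem_primeFactors hp
      have hps : p ∈ d.factorization.support := by
        rw [Nat.support_factorization]; exact hp
      have hne := hterm p hps
      have he1 : d.factorization p = 1 := by
        by_contra hne1
        have hpos : d.factorization p ≠ 0 := Finsupp.mem_support_iff.mp hps
        exact hne (G_apply_prime_pow ha hpp (by omega))
      refine ⟨he1, ?_⟩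
      rw [he1, pow_one, G_apply_prime hpp] at hne
      by_contra hpab
      have hnab : ¬ p ∣ a * b := fun hdvd => hpab (Nat.mem_primeFactors.mpr ⟨hpp, hdvd, hab⟩)
      have hpa : ¬ p ∣ a := fun h => hnab (dvd_mul_of_dvd_left h b)
      have hpb : ¬ p ∣ b := fun h => hnab (dvd_mul_of_dvd_right h a)
      exact hne (by rw [psiab_prime_not_dvd hpp hpa hpb]; ring)
    have hsq : Squarefree d := by
      rw [Nat.squarefree_iff_factorization_le_one hd0]
      intro p
      by_cases hps : p ∈ d.primeFactors
      · exact le_of_eq (hkey p hps).1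
      · rw [← Nat.support_factorization, Finsupp.notMem_support_iff] at hps
        simp [hps]
    have hsub : d.primeFactors ⊆ (a * b).primeFactors := fun p hp => (hkey p hp).2
    refine hnd ?_
    rw [← Nat.prod_primeFactors_of_squarefree hsq, hN]
    exact Finset.prod_dvd_prod_of_subset _ _ _ hsub
  rw [tsum_eq_sum hvanish]
  have hsum : ∑ d ∈ N.divisors, psiMu a b d / (d : ℝ)
      = ∑ d ∈ N.divisors, ((psiF a b * (μ : ArithmeticFunction ℤ)).pmul invId) d := by
    refine Finset.sum_congr rfl fun d hd => ?_
    rw [psiMu_eq, pmul_apply, invId_apply, div_eq_mul_inv]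
  rw [hsum, ← coe_zeta_mul_apply,
    ← IsMultiplicative.prodPrimeFactors_add_of_squarefree isMultiplicative_zeta.natCast hH hNsq,
    prodPrimeFactors_apply hN0, hNpf]
  have hSeq : (a * b).primeFactors
      = b.primeFactors ∪ (a.primeFactors \ b.primeFactors) := by
    rw [Nat.primeFactors_mul ha.ne' hb.ne', Finset.union_sdiff_self_eq_union, Finset.union_comm]
  rw [hSeq, Finset.prod_union Finset.disjoint_sdiff]
  have hfac : ∀ p : ℕ, p ≠ 0 →
      ((ζ : ArithmeticFunction ℝ) + (psiF a b * (μ : ArithmeticFunction ℤ)).pmul invId) p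
        = 1 + (psiF a b * (μ : ArithmeticFunction ℤ)) p * (p : ℝ)⁻¹ := by
    intro p hp
    rw [ArithmeticFunction.add_apply, pmul_apply, invId_apply, natCoe_apply, zeta_apply_ne hp, Nat.cast_one]
  congr 1
  · refine Finset.prod_congr rfl fun p hp => ?_
    have hpp : p.Prime := Nat.prime_of_mem_primeFactors hp
    have hpb : p ∣ b := Nat.dvd_of_mem_primeFactors hp
    rw [hfac p hpp.pos.ne', G_apply_prime hpp, psiab_prime_dvd_b hpp hpb, one_div]
    ring
  · have h2v : (1 : ℝ) + 1 / (((2 : ℕ) : ℝ) * (((2 : ℕ) : ℝ) - 2)) = 1 := by norm_num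
    rw [Finset.prod_erase (f := fun p : ℕ => (1 : ℝ) + 1 / ((p : ℝ) * ((p : ℝ) - 2))) _ h2v]
    refine Finset.prod_congr rfl fun p hp => ?_
    obtain ⟨hpa', hpb'⟩ := Finset.mem_sdiff.mp hp
    have hpp : p.Prime := Nat.prime_of_mem_primeFactors hpa'
    have hpa : p ∣ a := Nat.dvd_of_mem_primeFactors hpa'
    have hpb : ¬ p ∣ b := fun h => hpb' (Nat.mem_primeFactors.mpr ⟨hpp, h, hb.ne'⟩)
    rw [hfac p hpp.pos.ne', G_apply_prime hpp, psiab_prime_dvd_a hpp hpa hpb]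
    rcases eq_or_ne p 2 with rfl | h2
    · rw [phiCirc_two]
      norm_num
    · rw [phiCirc_prime hpp h2]
      have hp3 : (3 : ℝ) ≤ (p : ℝ) := by
        have : 3 ≤ p := by
          have := hpp.two_le
          omega
        exact_mod_cast this
      have h0 : (p : ℝ) ≠ 0 := by positivity
      have h1 : (p : ℝ) - 1 ≠ 0 := by intro h; simp at h0 ⊢; nlinarith
      have h2' : (p : ℝ) - 2 ≠ 0 := by intro h; nlinarith
      have hstep : (1 : ℝ) - 1 / ((p : ℝ) - 1) = ((p : ℝ) - 2) / ((p : ℝ) - 1) := by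
        field_simp
        ring
      rw [hstep, inv_div]
      field_simp
      ring
end

section
/- Let η₂, η₃, η₅, η₆, η₇, η₁, η₄ be positive integers and α₁, α₂, α₄ integers with gcd(η₆, η₇) = 1. Then the equation η₂η₃²η₅²η₆² + η₁²η₂η₄²η₇² + η₅η₇α₁ − η₄η₆α₄ = 0 holds if and only if there exists an integer α₂ such that η₁²η₂η₄²η₇ + η₅α₁ − η₆α₂ = 0 and η₂η₃²η₅²η₆ + η₇α₂ − η₄α₄ = 0. -/
theorem stmt_8 (η₁ η₂ η₃ η₄ η₅ η₆ η₇ : ℤ) (α₁ α₄ : ℤ)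
    (h₁ : 0 < η₁) (h₂ : 0 < η₂) (h₃ : 0 < η₃) (h₄ : 0 < η₄) (h₅ : 0 < η₅)
    (h₆ : 0 < η₆) (h₇ : 0 < η₇) (hcop : IsCoprime η₆ η₇) :
    η₂ * η₃ ^ 2 * η₅ ^ 2 * η₆ ^ 2 + η₁ ^ 2 * η₂ * η₄ ^ 2 * η₇ ^ 2 +
        η₅ * η₇ * α₁ - η₄ * η₆ * α₄ = 0 ↔
      ∃ α₂ : ℤ,
        η₁ ^ 2 * η₂ * η₄ ^ 2 * η₇ + η₅ * α₁ - η₆ * α₂ = 0 ∧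
        η₂ * η₃ ^ 2 * η₅ ^ 2 * η₆ + η₇ * α₂ - η₄ * α₄ = 0 := by
  constructor
  · intro h
    have hdvd : η₆ ∣ η₇ * (η₁ ^ 2 * η₂ * η₄ ^ 2 * η₇ + η₅ * α₁) := by
      refine ⟨η₄ * α₄ - η₂ * η₃ ^ 2 * η₅ ^ 2 * η₆, ?_⟩
      linarith [h]
    obtain ⟨c, hc⟩ := (hcop.dvd_of_dvd_mul_left hdvd)
    refine ⟨c, by linarith [hc], ?_⟩
    have h7 : η₇ ≠ 0 := h₇.ne'
    have : η₇ * (η₂ * η₃ ^ 2 * η₅ ^ 2 * η₆ + η₇ * c - η₄ * α₄) = 0 := by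
      have := hc; nlinarith [h, hc]
    exact (mul_eq_zero.mp this).resolve_left h7
  · rintro ⟨c, hc1, hc2⟩
    nlinarith [hc1, hc2]
end

section
/- Suppose positive integers η₁,...,η₇ and integers α₁, α₂, α₄ satisfy η₁²η₂η₄²η₇ + η₅α₁ − η₆α₂ = 0 and η₂η₃²η₅²η₆ + η₇α₂ − η₄α₄ = 0, together with gcd(η₃η₅η₆, η₁η₄η₇) = 1, gcd(η₅η₇, η₂α₄) = 1, and gcd(η₁η₂η₃, α₁α₄) = 1. Then gcd(η₁η₂, η₆α₂) = 1. -/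
theorem stmt_9 (η₁ η₂ η₃ η₄ η₅ η₆ η₇ : ℤ) (α₁ α₂ α₄ : ℤ)
    (h₁ : 0 < η₁) (h₂ : 0 < η₂) (h₃ : 0 < η₃) (h₄ : 0 < η₄) (h₅ : 0 < η₅)
    (h₆ : 0 < η₆) (h₇ : 0 < η₇)
    (e₁ : η₁ ^ 2 * η₂ * η₄ ^ 2 * η₇ + η₅ * α₁ - η₆ * α₂ = 0)
    (e₂ : η₂ * η₃ ^ 2 * η₅ ^ 2 * η₆ + η₇ * α₂ - η₄ * α₄ = 0)
    (c₁ : IsCoprime (η₃ * η₅ * η₆) (η₁ * η₄ * η₇))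
    (c₂ : IsCoprime (η₅ * η₇) (η₂ * α₄))
    (c₃ : IsCoprime (η₁ * η₂ * η₃) (α₁ * α₄)) :
    IsCoprime (η₁ * η₂) (η₆ * α₂) := by
  rw [Int.isCoprime_iff_gcd_eq_one]
  by_contra hg
  obtain ⟨p, hp, hpd⟩ := Nat.exists_prime_and_dvd hg
  have hpz : Prime (p : ℤ) := Nat.prime_iff_prime_int.mp hp
  have hd1 : (p : ℤ) ∣ η₁ * η₂ := (Int.natCast_dvd_natCast.mpr hpd).trans (Int.gcd_dvd_left _ _)
  have hd2 : (p : ℤ) ∣ η₆ * α₂ := (Int.natCast_dvd_natCast.mpr hpd).trans (Int.gcd_dvd_right _ _)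
  have hd12 : (p : ℤ) ∣ η₁ ∨ (p : ℤ) ∣ η₂ := hpz.dvd_mul.mp hd1
  have hbig : (p : ℤ) ∣ η₁ ^ 2 * η₂ * η₄ ^ 2 * η₇ := by
    rcases hd12 with h | h
    · exact Dvd.dvd.mul_right (Dvd.dvd.mul_right (Dvd.dvd.mul_right
        (h.trans (dvd_pow_self η₁ two_ne_zero)) _) _) _
    · exact Dvd.dvd.mul_right (Dvd.dvd.mul_right (Dvd.dvd.mul_left h _) _) _
  have h5a1 : (p : ℤ) ∣ η₅ * α₁ := by
    have : η₅ * α₁ = η₆ * α₂ - η₁ ^ 2 * η₂ * η₄ ^ 2 * η₇ := by linarith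
    rw [this]; exact dvd_sub hd2 hbig
  have hnu : ¬ IsUnit ((p : ℤ)) := hpz.not_unit
  rcases hpz.dvd_mul.mp h5a1 with h5 | ha1
  · rcases hd12 with h | h
    · exact hnu (c₁.isUnit_of_dvd' (Dvd.dvd.mul_right (Dvd.dvd.mul_left h5 _) _)
        (Dvd.dvd.mul_right (Dvd.dvd.mul_right h _) _))
    · exact hnu (c₂.isUnit_of_dvd' (Dvd.dvd.mul_right h5 _) (Dvd.dvd.mul_right h _))
  · rcases hd12 with h | h
    · exact hnu (c₃.isUnit_of_dvd' (Dvd.dvd.mul_right (Dvd.dvd.mul_right h _) _)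
        (Dvd.dvd.mul_right ha1 _))
    · exact hnu (c₃.isUnit_of_dvd' (Dvd.dvd.mul_right (Dvd.dvd.mul_left h _) _)
        (Dvd.dvd.mul_right ha1 _))
end

section
/- Under the same torsor equations and coprimality hypotheses (gcd(η₃η₅η₆, η₁η₄η₇) = 1, gcd(η₅η₇, η₂α₄) = 1, gcd(η₁η₂η₃, α₁α₄) = 1), one has gcd(α₂, η₃η₅) = 1 and gcd(η₂, η₄) = 1. -/
private lemma aux_drop {a b c : ℤ} (h : IsCoprime a (b + a * c)) : IsCoprime a b := by
  have := h.add_mul_left_right (-c)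
  have hb : b + a * c + a * -c = b := by ring
  rwa [hb] at this

theorem stmt_10 (η₁ η₂ η₃ η₄ η₅ η₆ η₇ : ℤ) (α₁ α₂ α₄ : ℤ)
    (h₁ : 0 < η₁) (h₂ : 0 < η₂) (h₃ : 0 < η₃) (h₄ : 0 < η₄) (h₅ : 0 < η₅)
    (h₆ : 0 < η₆) (h₇ : 0 < η₇)
    (e₁ : η₁ ^ 2 * η₂ * η₄ ^ 2 * η₇ + η₅ * α₁ - η₆ * α₂ = 0)
    (e₂ : η₂ * η₃ ^ 2 * η₅ ^ 2 * η₆ + η₇ * α₂ - η₄ * α₄ = 0)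
    (c₁ : IsCoprime (η₃ * η₅ * η₆) (η₁ * η₄ * η₇))
    (c₂ : IsCoprime (η₅ * η₇) (η₂ * α₄))
    (c₃ : IsCoprime (η₁ * η₂ * η₃) (α₁ * α₄)) :
    IsCoprime α₂ (η₃ * η₅) ∧ IsCoprime η₂ η₄ := by
  -- extract elementary coprimalities
  have c34 : IsCoprime η₃ η₄ := (c₁.of_mul_left_left.of_mul_left_left).of_mul_right_left.of_mul_right_right
  have c51 : IsCoprime η₅ η₁ := (c₁.of_mul_left_left.of_mul_left_right).of_mul_right_left.of_mul_right_left
  have c54 : IsCoprime η₅ η₄ := (c₁.of_mul_left_left.of_mul_left_right).of_mul_right_left.of_mul_right_right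
  have c57 : IsCoprime η₅ η₇ := (c₁.of_mul_left_left.of_mul_left_right).of_mul_right_right
  have c52 : IsCoprime η₅ η₂ := c₂.of_mul_left_left.of_mul_right_left
  have c72 : IsCoprime η₇ η₂ := c₂.of_mul_left_right.of_mul_right_left
  have c3a4 : IsCoprime η₃ α₄ := c₃.of_mul_left_right.of_mul_right_right
  have c2a1 : IsCoprime η₂ α₁ := c₃.of_mul_left_left.of_mul_left_right.of_mul_right_left
  -- IsCoprime η₃ α₂
  have h3 : IsCoprime η₃ α₂ := by
    have h : IsCoprime η₃ (η₄ * α₄) := c34.mul_right c3a4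
    have heq : η₄ * α₄ = η₇ * α₂ + η₃ * (η₂ * η₃ * η₅ ^ 2 * η₆) := by linarith [e₂, sq_nonneg η₃] <;> ring_nf
    rw [heq] at h
    exact (aux_drop h).of_mul_right_right
  -- IsCoprime η₅ α₂
  have h5 : IsCoprime η₅ α₂ := by
    have h : IsCoprime η₅ (η₆ * α₂) := by
      have h' : IsCoprime η₅ (η₁ ^ 2 * η₂ * η₄ ^ 2 * η₇) :=
        (((c51.pow_right).mul_right c52).mul_right (c54.pow_right)).mul_right c57
      have heq : η₁ ^ 2 * η₂ * η₄ ^ 2 * η₇ = η₆ * α₂ + η₅ * (-α₁) := by linarith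
      rw [heq] at h'
      exact aux_drop h'
    exact h.of_mul_right_right
  -- IsCoprime η₂ η₄
  have h24 : IsCoprime η₂ η₄ := by
    have h2a2 : IsCoprime η₂ α₂ := by
      have h' : IsCoprime η₂ (η₅ * α₁) := c52.symm.mul_right c2a1
      have heq : η₅ * α₁ = η₆ * α₂ + η₂ * (-(η₁ ^ 2 * η₄ ^ 2 * η₇)) := by linarith
      rw [heq] at h'
      exact (aux_drop h').of_mul_right_right
    have h' : IsCoprime η₂ (η₇ * α₂) := c72.symm.mul_right h2a2
    have heq : η₇ * α₂ = η₄ * α₄ + η₂ * (-(η₃ ^ 2 * η₅ ^ 2 * η₆)) := by linarith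
    rw [heq] at h'
    exact (aux_drop h').of_mul_right_left
  exact ⟨(h3.mul_left h5).symm, h24⟩
end

section
/- Suppose positive integers η₁,...,η₇ and integers α₁, α₂, α₄ satisfy the two torsor equations η₁²η₂η₄²η₇ + η₅α₁ − η₆α₂ = 0 and η₂η₃²η₅²η₆ + η₇α₂ − η₄α₄ = 0, with gcd(η₄, η₅) = 1. Then there exists an integer α₃ such that η₂η₃²η₅η₆² + η₇α₁ − η₄α₃ = 0 and η₁²η₂η₄η₇² + η₅α₃ − η₆α₄ = 0. -/
theorem stmt_11 (η₁ η₂ η₃ η₄ η₅ η₆ η₇ : ℤ) (α₁ α₂ α₄ : ℤ)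
    (h₁ : 0 < η₁) (h₂ : 0 < η₂) (h₃ : 0 < η₃) (h₄ : 0 < η₄) (h₅ : 0 < η₅)
    (h₆ : 0 < η₆) (h₇ : 0 < η₇)
    (e₁ : η₁ ^ 2 * η₂ * η₄ ^ 2 * η₇ + η₅ * α₁ - η₆ * α₂ = 0)
    (e₂ : η₂ * η₃ ^ 2 * η₅ ^ 2 * η₆ + η₇ * α₂ - η₄ * α₄ = 0)
    (hcop : IsCoprime η₄ η₅) :
    ∃ α₃ : ℤ,
      η₂ * η₃ ^ 2 * η₅ * η₆ ^ 2 + η₇ * α₁ - η₄ * α₃ = 0 ∧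
      η₁ ^ 2 * η₂ * η₄ * η₇ ^ 2 + η₅ * α₃ - η₆ * α₄ = 0 := by
  set N := η₂ * η₃ ^ 2 * η₅ * η₆ ^ 2 + η₇ * α₁ with hN
  have key : η₅ * N = η₄ * (η₆ * α₄ - η₁ ^ 2 * η₂ * η₄ * η₇ ^ 2) := by
    have := e₁; have := e₂; nlinarith [e₁, e₂, mul_comm η₆ η₇]
  have hdvd : η₄ ∣ N := hcop.dvd_of_dvd_mul_left ⟨_, key⟩
  obtain ⟨α₃, hα₃⟩ := hdvd
  refine ⟨α₃, by omega, ?_⟩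
  have h4 : η₄ ≠ 0 := h₄.ne'
  have : η₄ * (η₅ * α₃) = η₄ * (η₆ * α₄ - η₁ ^ 2 * η₂ * η₄ * η₇ ^ 2) := by
    rw [hα₃] at key; linarith [key]
  have := mul_left_cancel₀ h4 this
  linarith
end

section
/- If integers satisfy the four equations η₁²η₂η₄²η₇ + η₅α₁ − η₆α₂ = 0, η₂η₃²η₅²η₆ + η₇α₂ − η₄α₄ = 0, η₂η₃²η₅η₆² + η₇α₁ − η₄α₃ = 0, η₁²η₂η₄η₇² + η₅α₃ − η₆α₄ = 0, and η₄η₅η₆η₇ ≠ 0, then η₁²η₂²η₃²η₄η₅η₆η₇ + α₁α₄ − α₂α₃ = 0. -/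
theorem stmt_12 (η₁ η₂ η₃ η₄ η₅ η₆ η₇ α₁ α₂ α₃ α₄ : ℤ)
    (e₁ : η₁ ^ 2 * η₂ * η₄ ^ 2 * η₇ + η₅ * α₁ - η₆ * α₂ = 0)
    (e₂ : η₂ * η₃ ^ 2 * η₅ ^ 2 * η₆ + η₇ * α₂ - η₄ * α₄ = 0)
    (e₃ : η₂ * η₃ ^ 2 * η₅ * η₆ ^ 2 + η₇ * α₁ - η₄ * α₃ = 0)
    (e₄ : η₁ ^ 2 * η₂ * η₄ * η₇ ^ 2 + η₅ * α₃ - η₆ * α₄ = 0)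
    (hne : η₄ * η₅ * η₆ * η₇ ≠ 0) :
    η₁ ^ 2 * η₂ ^ 2 * η₃ ^ 2 * η₄ * η₅ * η₆ * η₇ + α₁ * α₄ - α₂ * α₃ = 0 := by
  have h5 : η₅ ≠ 0 := fun h => hne (by rw [h]; ring)
  have key : η₅ * (η₁ ^ 2 * η₂ ^ 2 * η₃ ^ 2 * η₄ * η₅ * η₆ * η₇ + α₁ * α₄ - α₂ * α₃) = 0 := by
    linear_combination α₄ * e₁ - α₂ * e₄ + η₁ ^ 2 * η₂ * η₄ * η₇ * e₂
  exact (mul_eq_zero.mp key).resolve_left h5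
end

section
/- Let h(u₂, t₇, t₆) = max{t₆, t₇, t₇|t₇ − t₆u₂|, |t₇ − t₆u₂|·|t₆ + t₇u₂|}. For fixed t₆, t₇ > 0, the Lebesgue measure of {u₂ ∈ ℝ : h(u₂, t₇, t₆) ≤ 1} is O(t₆^{-1/2} t₇^{-1/2}). -/
open MeasureTheory

noncomputable def hfun (u₂ t₇ t₆ : ℝ) : ℝ :=
  max (max t₆ t₇) (max (t₇ * |t₇ - t₆ * u₂|) (|t₇ - t₆ * u₂| * |t₆ + t₇ * u₂|))

theorem stmt_15 :
    ∃ C : ℝ, 0 < C ∧ ∀ t₆ t₇ : ℝ, 0 < t₆ → 0 < t₇ →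
      (volume {u₂ : ℝ | hfun u₂ t₇ t₆ ≤ 1}).toReal ≤
        C * t₆ ^ (-(1 / 2 : ℝ)) * t₇ ^ (-(1 / 2 : ℝ)) := by
  refine ⟨4, by norm_num, fun t₆ t₇ h₆ h₇ => ?_⟩
  have hmul : (0:ℝ) < t₆ * t₇ := mul_pos h₆ h₇
  set s : ℝ := (t₆ * t₇) ^ (-(1/2 : ℝ)) with hs
  have hspos : 0 < s := Real.rpow_pos_of_pos hmul _
  have hss : s * s = (t₆ * t₇)⁻¹ := by
    rw [hs, ← Real.rpow_add hmul,
      show (-(1/2:ℝ)) + -(1/2) = -1 by norm_num, Real.rpow_neg_one]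
  have hsub : {u₂ : ℝ | hfun u₂ t₇ t₆ ≤ 1} ⊆
      Set.Icc (t₇ / t₆ - s) (t₇ / t₆ + s) ∪ Set.Icc (-t₆ / t₇ - s) (-t₆ / t₇ + s) := by
    intro u hu
    simp only [Set.mem_setOf_eq, hfun] at hu
    have h1 : |t₇ - t₆ * u| * |t₆ + t₇ * u| ≤ 1 :=
      le_trans (le_trans (le_max_right _ _) (le_max_right _ _)) hu
    have e1 : t₆ * |u - t₇ / t₆| = |t₇ - t₆ * u| :=
      calc t₆ * |u - t₇ / t₆| = |t₆ * (u - t₇ / t₆)| := by rw [abs_mul, abs_of_pos h₆]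
        _ = |t₇ - t₆ * u| := by
            rw [show t₆ * (u - t₇ / t₆) = -(t₇ - t₆ * u) by field_simp; ring, abs_neg]
    have e2 : t₇ * |u - (-t₆ / t₇)| = |t₆ + t₇ * u| :=
      calc t₇ * |u - (-t₆ / t₇)| = |t₇ * (u - (-t₆ / t₇))| := by rw [abs_mul, abs_of_pos h₇]
        _ = |t₆ + t₇ * u| := by
            rw [show t₇ * (u - (-t₆ / t₇)) = t₆ + t₇ * u by field_simp; ring]
    have h2 : |u - t₇ / t₆| * |u - (-t₆ / t₇)| ≤ s * s := by
      rw [hss, inv_eq_one_div]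
      refine (le_div_iff₀' hmul).mpr ?_
      calc t₆ * t₇ * (|u - t₇ / t₆| * |u - (-t₆ / t₇)|)
          = (t₆ * |u - t₇ / t₆|) * (t₇ * |u - (-t₆ / t₇)|) := by ring
        _ = |t₇ - t₆ * u| * |t₆ + t₇ * u| := by rw [e1, e2]
        _ ≤ 1 := h1
    have h3 : |u - t₇ / t₆| ≤ s ∨ |u - (-t₆ / t₇)| ≤ s := by
      by_contra hc
      push_neg at hc
      have := mul_lt_mul'' hc.1 hc.2 hspos.le hspos.le
      linarith
    rcases h3 with h3 | h3
    · left
      rcases abs_le.mp h3 with ⟨ha, hb⟩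
      exact ⟨by linarith, by linarith⟩
    · right
      rcases abs_le.mp h3 with ⟨ha, hb⟩
      exact ⟨by linarith, by linarith⟩
  have hμ : volume {u₂ : ℝ | hfun u₂ t₇ t₆ ≤ 1} ≤
      ENNReal.ofReal (2 * s) + ENNReal.ofReal (2 * s) := by
    refine le_trans (measure_mono hsub) (le_trans (measure_union_le _ _) ?_)
    rw [Real.volume_Icc, Real.volume_Icc,
      show t₇ / t₆ + s - (t₇ / t₆ - s) = 2 * s by ring,
      show -t₆ / t₇ + s - (-t₆ / t₇ - s) = 2 * s by ring]
  have htop : ENNReal.ofReal (2 * s) + ENNReal.ofReal (2 * s) ≠ ⊤ := by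
    exact ENNReal.add_ne_top.mpr ⟨ENNReal.ofReal_ne_top, ENNReal.ofReal_ne_top⟩
  have h4 : (volume {u₂ : ℝ | hfun u₂ t₇ t₆ ≤ 1}).toReal ≤ 4 * s := by
    refine le_trans (ENNReal.toReal_mono htop hμ) ?_
    rw [ENNReal.toReal_add ENNReal.ofReal_ne_top ENNReal.ofReal_ne_top, ENNReal.toReal_ofReal (by positivity)]
    linarith
  calc _ ≤ 4 * s := h4
    _ = 4 * t₆ ^ (-(1/2 : ℝ)) * t₇ ^ (-(1/2 : ℝ)) := by
        rw [hs, Real.mul_rpow h₆.le h₇.le, mul_assoc]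
end

section
/- Let h(u₂, t₇, t₆) = max{t₆, t₇, t₇|t₇ − t₆u₂|, |t₇ − t₆u₂|·|t₆ + t₇u₂|} and D_h = {(u₂,t₇,t₆) ∈ ℝ³ : t₆,t₇ > 0, h(u₂,t₇,t₆) ≤ 1}. Then for any Z₆ > 0, meas{(u₂,t₇,t₆) ∈ D_h : t₆Z₆ < 1} ≪ Z₆^{-1/2}, and analogously meas{(u₂,t₇,t₆) ∈ D_h : t₇Z₇ < 1} ≪ Z₇^{-1/2} for any Z₇ > 0. -/
open MeasureTheory

def Dh : Set (ℝ × ℝ × ℝ) :=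
  {p | 0 < p.2.2 ∧ 0 < p.2.1 ∧ hfun p.1 p.2.1 p.2.2 ≤ 1}

lemma lint_one (a : ℝ) (ha : 0 ≤ a) :
    ∫⁻ t in Set.Ioc (0:ℝ) a, ENNReal.ofReal (t ^ (-(1/2):ℝ)) = ENNReal.ofReal (2 * a ^ ((1/2):ℝ)) := by
  have hint : IntegrableOn (fun t : ℝ => t ^ (-(1/2):ℝ)) (Set.Ioc 0 a) := by
    have := intervalIntegral.intervalIntegrable_rpow' (a := 0) (b := a) (r := -(1/2)) (by norm_num)
    rwa [intervalIntegrable_iff_integrableOn_Ioc_of_le ha] at this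
  rw [← ofReal_integral_eq_lintegral_ofReal hint ?_]
  · congr 1
    rw [← intervalIntegral.integral_of_le ha, integral_rpow (Or.inl (by norm_num))]
    rw [Real.zero_rpow (by norm_num)]
    norm_num
    ring
  · filter_upwards [ae_restrict_mem measurableSet_Ioc] with t ht
    exact Real.rpow_nonneg ht.1.le _

def Tset (a b : ℝ) : Set (ℝ × ℝ × ℝ) :=
  {p | (p.2.1 ∈ Set.Ioc (0:ℝ) b ∧ p.2.2 ∈ Set.Ioc (0:ℝ) a) ∧
    (|p.1 - p.2.1 / p.2.2| ≤ (p.2.2 * p.2.1) ^ (-(1/2):ℝ) ∨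
     |p.1 + p.2.2 / p.2.1| ≤ (p.2.2 * p.2.1) ^ (-(1/2):ℝ))}

lemma Tset_meas (a b : ℝ) : MeasurableSet (Tset a b) := by
  have m1 : Measurable fun p : ℝ × ℝ × ℝ => p.1 := measurable_fst
  have m7 : Measurable fun p : ℝ × ℝ × ℝ => p.2.1 := measurable_fst.comp measurable_snd
  have m6 : Measurable fun p : ℝ × ℝ × ℝ => p.2.2 := measurable_snd.comp measurable_snd
  have mr : Measurable fun p : ℝ × ℝ × ℝ => (p.2.2 * p.2.1) ^ (-(1/2):ℝ) := by fun_prop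
  exact ((measurableSet_Ioc.preimage m7).inter (measurableSet_Ioc.preimage m6)).inter
    ((measurableSet_le ((m1.sub (m7.div m6)).abs) mr).union
      (measurableSet_le ((m1.add (m6.div m7)).abs) mr))

lemma key (a b : ℝ) (ha : 0 ≤ a) (hb : 0 ≤ b) :
    volume (Tset a b) ≤ ENNReal.ofReal (16 * (a ^ ((1/2):ℝ) * b ^ ((1/2):ℝ))) := by
  have hvol : (volume : Measure (ℝ × ℝ × ℝ)) = (volume : Measure ℝ).prod (volume : Measure (ℝ × ℝ)) :=
    (Measure.volume_eq_prod ℝ (ℝ × ℝ))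
  rw [hvol, Measure.prod_apply_symm (Tset_meas a b)]
  set R : Set (ℝ × ℝ) := Set.Ioc (0:ℝ) b ×ˢ Set.Ioc (0:ℝ) a with hR
  have slice_le : ∀ y : ℝ × ℝ, volume ((fun x => (x, y)) ⁻¹' Tset a b) ≤
      R.indicator (fun y => ENNReal.ofReal (4 * (y.2 * y.1) ^ (-(1/2):ℝ))) y := by
    intro y
    by_cases hy : y ∈ R
    · rw [Set.indicator_of_mem hy]
      set r : ℝ := (y.2 * y.1) ^ (-(1/2):ℝ) with hr
      have hrnn : 0 ≤ r := Real.rpow_nonneg (mul_nonneg hy.2.1.le hy.1.1.le) _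
      have hsub : ((fun x => (x, y)) ⁻¹' Tset a b) ⊆
          Set.Icc (y.1 / y.2 - r) (y.1 / y.2 + r) ∪ Set.Icc (-(y.2 / y.1) - r) (-(y.2 / y.1) + r) := by
        intro x hx
        rcases hx.2 with h | h
        · left
          have := abs_le.mp h
          constructor <;> simp at this ⊢ <;> linarith [this.1, this.2]
        · right
          have := abs_le.mp h
          constructor <;> simp at this ⊢ <;> linarith [this.1, this.2]
      calc volume ((fun x => (x, y)) ⁻¹' Tset a b)
          ≤ volume (Set.Icc (y.1 / y.2 - r) (y.1 / y.2 + r)) +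
            volume (Set.Icc (-(y.2 / y.1) - r) (-(y.2 / y.1) + r)) :=
            le_trans (measure_mono hsub) (measure_union_le _ _)
        _ = ENNReal.ofReal (2 * r) + ENNReal.ofReal (2 * r) := by
            rw [Real.volume_Icc, Real.volume_Icc]; ring_nf
        _ ≤ ENNReal.ofReal (4 * (y.2 * y.1) ^ (-(1/2):ℝ)) := by
            rw [← ENNReal.ofReal_add (by linarith) (by linarith)]
            exact ENNReal.ofReal_le_ofReal (by rw [← hr]; linarith)
    · rw [Set.indicator_of_notMem hy]
      have : ((fun x => (x, y)) ⁻¹' Tset a b) = ∅ := by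
        ext x
        simp only [Set.mem_preimage, Tset, Set.mem_setOf_eq, Set.mem_empty_iff_false, iff_false]
        intro hmem
        exact hy (Set.mem_prod.mpr ⟨hmem.1.1, hmem.1.2⟩)
      simp [this]
  calc ∫⁻ y, volume ((fun x => (x, y)) ⁻¹' Tset a b) ∂volume
      ≤ ∫⁻ y, R.indicator (fun y => ENNReal.ofReal (4 * (y.2 * y.1) ^ (-(1/2):ℝ))) y ∂volume :=
        lintegral_mono slice_le
    _ = ∫⁻ y in R, ENNReal.ofReal (4 * (y.2 * y.1) ^ (-(1/2):ℝ)) ∂volume := by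
        rw [lintegral_indicator (measurableSet_Ioc.prod measurableSet_Ioc) _]
    _ = ∫⁻ y in R, (ENNReal.ofReal 4 * ENNReal.ofReal (y.1 ^ (-(1/2):ℝ))) *
          ENNReal.ofReal (y.2 ^ (-(1/2):ℝ)) ∂volume := by
        apply setLIntegral_congr_fun (measurableSet_Ioc.prod measurableSet_Ioc)
        intro y hy
        beta_reduce
        have h1 : (0:ℝ) < y.1 := hy.1.1
        have h2 : (0:ℝ) < y.2 := hy.2.1
        rw [← ENNReal.ofReal_mul (by norm_num), ← ENNReal.ofReal_mul (by positivity)]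
        congr 1
        rw [Real.mul_rpow h2.le h1.le]
        ring
    _ = (∫⁻ x in Set.Ioc (0:ℝ) b, ENNReal.ofReal 4 * ENNReal.ofReal (x ^ (-(1/2):ℝ))) *
          ∫⁻ x in Set.Ioc (0:ℝ) a, ENNReal.ofReal (x ^ (-(1/2):ℝ)) := by
        rw [hR, show (volume : Measure (ℝ × ℝ)) = (volume : Measure ℝ).prod volume from
          Measure.volume_eq_prod ℝ ℝ, ← Measure.prod_restrict]
        exact lintegral_prod_mul (f := fun x : ℝ => ENNReal.ofReal 4 * ENNReal.ofReal (x ^ (-(1/2):ℝ)))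
          (g := fun x : ℝ => ENNReal.ofReal (x ^ (-(1/2):ℝ)))
          (Measurable.aemeasurable (by fun_prop)) (Measurable.aemeasurable (by fun_prop))
    _ ≤ ENNReal.ofReal (16 * (a ^ ((1/2):ℝ) * b ^ ((1/2):ℝ))) := by
        rw [lintegral_const_mul _ (by fun_prop), lint_one a ha, lint_one b hb,
          ← ENNReal.ofReal_mul (by norm_num), ← ENNReal.ofReal_mul (by positivity)]
        apply ENNReal.ofReal_le_ofReal
        nlinarith [Real.rpow_nonneg ha (1/2), Real.rpow_nonneg hb (1/2)]

lemma mem_Tset {p : ℝ × ℝ × ℝ} (hp : p ∈ Dh) {a b : ℝ}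
    (h6 : p.2.2 ≤ a) (h7 : p.2.1 ≤ b) : p ∈ Tset a b := by
  obtain ⟨h₆, h₇, hh⟩ := hp
  set u := p.1; set t₇ := p.2.1; set t₆ := p.2.2
  have h3 : |t₇ - t₆ * u| * |t₆ + t₇ * u| ≤ 1 :=
    le_trans (le_trans (le_max_right _ _) (le_max_right _ _)) hh
  set c : ℝ := t₇ / t₆ with hc
  set d : ℝ := -(t₆ / t₇) with hd
  set r : ℝ := (t₆ * t₇) ^ (-(1/2):ℝ) with hr
  have hmulpos : (0:ℝ) < t₆ * t₇ := mul_pos h₆ h₇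
  have hrpos : 0 < r := Real.rpow_pos_of_pos hmulpos _
  have hr2 : r * r = (t₆ * t₇)⁻¹ := by
    rw [hr, ← Real.rpow_add hmulpos]
    norm_num [Real.rpow_neg_one]
  have e1 : |t₇ - t₆ * u| = t₆ * |u - c| := by
    rw [show t₇ - t₆ * u = -(t₆ * (u - c)) by rw [hc]; field_simp; ring, abs_neg, abs_mul,
      abs_of_pos h₆]
  have e2 : |t₆ + t₇ * u| = t₇ * |u - d| := by
    rw [show t₆ + t₇ * u = t₇ * (u - d) by rw [hd]; field_simp; ring, abs_mul, abs_of_pos h₇]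
  have h4 : |u - c| * |u - d| ≤ (t₆ * t₇)⁻¹ := by
    rw [e1, e2] at h3
    rw [← one_div, le_div_iff₀ hmulpos]
    nlinarith [h3]
  refine ⟨⟨⟨h₇, h7⟩, ⟨h₆, h6⟩⟩, ?_⟩
  rcases le_total |u - c| |u - d| with h | h
  · left
    have h5 : |u - c| * |u - c| ≤ r * r := by
      rw [hr2]
      exact le_trans (mul_le_mul_of_nonneg_left h (abs_nonneg _)) h4
    nlinarith [abs_nonneg (u - c)]
  · right
    have h5 : |u - d| * |u - d| ≤ r * r := by
      rw [hr2]
      exact le_trans (mul_le_mul_of_nonneg_right h (abs_nonneg _)) h4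
    have : |u - d| ≤ r := by nlinarith [abs_nonneg (u - d)]
    rwa [hd, sub_neg_eq_add] at this

lemma final_bound {Z : ℝ} (hZ : 0 < Z) :
    16 * (min 1 Z⁻¹) ^ ((1/2):ℝ) ≤ 16 * Z ^ (-(1/2):ℝ) := by
  have h1 : (min 1 Z⁻¹ : ℝ) ^ ((1/2):ℝ) ≤ (Z⁻¹) ^ ((1/2):ℝ) :=
    Real.rpow_le_rpow (le_min zero_le_one (by positivity)) (min_le_right _ _) (by norm_num)
  have h2 : (Z⁻¹ : ℝ) ^ ((1/2):ℝ) = Z ^ (-(1/2):ℝ) := by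
    rw [Real.rpow_neg hZ.le, ← Real.inv_rpow hZ.le]
  linarith [h1, h2 ▸ h1]

theorem stmt_16 :
    ∃ C : ℝ, 0 < C ∧
      (∀ Z₆ : ℝ, 0 < Z₆ →
        (volume {p ∈ Dh | p.2.2 * Z₆ < 1}).toReal ≤ C * Z₆ ^ (-(1 / 2 : ℝ))) ∧
      (∀ Z₇ : ℝ, 0 < Z₇ →
        (volume {p ∈ Dh | p.2.1 * Z₇ < 1}).toReal ≤ C * Z₇ ^ (-(1 / 2 : ℝ))) := by
  refine ⟨16, by norm_num, ?_, ?_⟩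
  · intro Z hZ
    have hsub : {p ∈ Dh | p.2.2 * Z < 1} ⊆ Tset (min 1 Z⁻¹) 1 := by
      intro p hp
      have h61 : p.2.2 ≤ 1 := le_trans (le_trans (le_max_left _ _) (le_max_left _ _)) hp.1.2.2
      have h71 : p.2.1 ≤ 1 := le_trans (le_trans (le_max_right _ _) (le_max_left _ _)) hp.1.2.2
      have h6Z : p.2.2 ≤ Z⁻¹ := by
        rw [← one_div]; exact le_of_lt ((lt_div_iff₀ hZ).mpr (by linarith [hp.2]))
      exact mem_Tset hp.1 (le_min h61 h6Z) h71
    have hkey := key (min 1 Z⁻¹) 1 (le_min zero_le_one (by positivity)) zero_le_one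
    have hle : volume {p ∈ Dh | p.2.2 * Z < 1} ≤
        ENNReal.ofReal (16 * ((min 1 Z⁻¹) ^ ((1/2):ℝ) * (1:ℝ) ^ ((1/2):ℝ))) :=
      le_trans (measure_mono hsub) hkey
    have := ENNReal.toReal_le_of_le_ofReal (by positivity) hle
    calc (volume {p ∈ Dh | p.2.2 * Z < 1}).toReal
        ≤ 16 * ((min 1 Z⁻¹) ^ ((1/2):ℝ) * (1:ℝ) ^ ((1/2):ℝ)) := this
      _ = 16 * (min 1 Z⁻¹) ^ ((1/2):ℝ) := by rw [Real.one_rpow]; ring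
      _ ≤ 16 * Z ^ (-(1/2):ℝ) := final_bound hZ
  · intro Z hZ
    have hsub : {p ∈ Dh | p.2.1 * Z < 1} ⊆ Tset 1 (min 1 Z⁻¹) := by
      intro p hp
      have h61 : p.2.2 ≤ 1 := le_trans (le_trans (le_max_left _ _) (le_max_left _ _)) hp.1.2.2
      have h71 : p.2.1 ≤ 1 := le_trans (le_trans (le_max_right _ _) (le_max_left _ _)) hp.1.2.2
      have h7Z : p.2.1 ≤ Z⁻¹ := by
        rw [← one_div]; exact le_of_lt ((lt_div_iff₀ hZ).mpr (by linarith [hp.2]))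
      exact mem_Tset hp.1 h61 (le_min h71 h7Z)
    have hkey := key 1 (min 1 Z⁻¹) zero_le_one (le_min zero_le_one (by positivity))
    have hle : volume {p ∈ Dh | p.2.1 * Z < 1} ≤
        ENNReal.ofReal (16 * ((1:ℝ) ^ ((1/2):ℝ) * (min 1 Z⁻¹) ^ ((1/2):ℝ))) :=
      le_trans (measure_mono hsub) hkey
    have := ENNReal.toReal_le_of_le_ofReal (by positivity) hle
    calc (volume {p ∈ Dh | p.2.1 * Z < 1}).toReal
        ≤ 16 * ((1:ℝ) ^ ((1/2):ℝ) * (min 1 Z⁻¹) ^ ((1/2):ℝ)) := this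
      _ = 16 * (min 1 Z⁻¹) ^ ((1/2):ℝ) := by rw [Real.one_rpow]; ring
      _ ≤ 16 * Z ^ (-(1/2):ℝ) := final_bound hZ
end

section
/- For each prime p, the sum over (k₁,...,k₅) ∈ ℤ_{≥0}⁵ of Θ(p^{k₁}, p^{k₂}, p^{k₃}, p^{k₄}, p^{k₅})·p^{-(k₁+k₂+k₃+k₄+k₅)} equals (1 − 1/p²)^{-1}(1 − 1/p)(1 + 6/p + 1/p²). -/
open Finset

noncomputable def phiStar (n : ℕ) : ℝ := ∏ p ∈ n.primeFactors, (1 - 1 / (p : ℝ))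

noncomputable def phiDag (n : ℕ) : ℝ := ∏ p ∈ n.primeFactors, (1 - 1 / (p : ℝ) ^ 2)

noncomputable def Theta (η₁ η₂ η₃ η₄ η₅ : ℕ) : ℝ :=
  if Nat.gcd (η₁ * η₄) (η₃ * η₅) = 1 ∧ Nat.gcd η₂ (η₄ * η₅) = 1 then
    phiStar (η₁ * η₂ * η₃ * η₄ * η₅) / phiDag (η₁ * η₂ * η₃ * η₄ * η₅) *
      phiStar (η₂ * η₃ * η₄ * η₅) * phiStar (η₁ * η₂ * η₄ * η₅) *
      (phiStar (η₁ * η₂) / phiStar (η₂ * η₄)) *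
      (phiStar (η₂ * η₃) / phiStar (η₂ * η₅))
  else 0

namespace Stmt18Aux

noncomputable def Sf (p : ℕ) (n : ℕ) : ℝ := if n = 0 then 1 else 1 - 1 / (p : ℝ)

noncomputable def Df (p : ℕ) (n : ℕ) : ℝ := if n = 0 then 1 else 1 - 1 / (p : ℝ) ^ 2

lemma phiStar_pp {p : ℕ} (hp : p.Prime) (n : ℕ) : phiStar (p ^ n) = Sf p n := by
  rcases eq_or_ne n 0 with rfl | h
  · simp [phiStar, Sf]
  · simp [phiStar, Sf, Nat.primeFactors_prime_pow h hp, h]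

lemma phiDag_pp {p : ℕ} (hp : p.Prime) (n : ℕ) : phiDag (p ^ n) = Df p n := by
  rcases eq_or_ne n 0 with rfl | h
  · simp [phiDag, Df]
  · simp [phiDag, Df, Nat.primeFactors_prime_pow h hp, h]

lemma gcd_pp {p : ℕ} (hp : p.Prime) (m n : ℕ) :
    Nat.gcd (p ^ m) (p ^ n) = 1 ↔ m = 0 ∨ n = 0 := by
  constructor
  · intro h
    by_contra hc
    push_neg at hc
    have h1 : p ∣ Nat.gcd (p ^ m) (p ^ n) :=
      Nat.dvd_gcd (dvd_pow_self p hc.1) (dvd_pow_self p hc.2)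
    rw [h, Nat.dvd_one] at h1
    exact hp.one_lt.ne' h1
  · rintro (rfl | rfl) <;> simp

lemma thetaPow {p : ℕ} (hp : p.Prime) (a b c d e : ℕ) :
    Theta (p ^ a) (p ^ b) (p ^ c) (p ^ d) (p ^ e) =
      if ((a = 0 ∧ d = 0) ∨ (c = 0 ∧ e = 0)) ∧ (b = 0 ∨ (d = 0 ∧ e = 0)) then
        Sf p (a + b + c + d + e) / Df p (a + b + c + d + e) *
          Sf p (b + c + d + e) * Sf p (a + b + d + e) *
          (Sf p (a + b) / Sf p (b + d)) * (Sf p (b + c) / Sf p (b + e))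
      else 0 := by
  rw [Theta]
  simp only [← pow_add, gcd_pp hp, Nat.add_eq_zero, phiStar_pp hp, phiDag_pp hp]

noncomputable def del : ℕ → ℝ := fun k => if k = 0 then 1 else 0

noncomputable def eps (q : ℝ) : ℕ → ℝ := fun k => if k = 0 then 0 else q ^ k

lemma eps_eq (q : ℝ) : eps q = fun k => q ^ k - del k := by
  funext k
  rcases eq_or_ne k 0 with rfl | h
  · simp [eps, del]
  · simp [eps, del, h]

def Good {α : Type*} (f : α → ℝ) : Prop := Summable f ∧ ∀ x, 0 ≤ f x

lemma good_del : Good del := by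
  constructor
  · apply summable_of_ne_finset_zero (s := {0})
    intro k hk
    simp only [mem_singleton] at hk
    simp [del, hk]
  · intro k
    unfold del
    split <;> norm_num

lemma tsum_del : ∑' k, del k = 1 := by
  rw [tsum_eq_single 0]
  · simp [del]
  · intro b hb; simp [del, hb]

lemma good_eps {q : ℝ} (h0 : 0 ≤ q) (h1 : q < 1) : Good (eps q) := by
  constructor
  · rw [eps_eq]
    exact (summable_geometric_of_lt_one h0 h1).sub good_del.1
  · intro k
    unfold eps
    split
    · exact le_refl 0
    · positivity

lemma tsum_eps {q : ℝ} (h0 : 0 ≤ q) (h1 : q < 1) :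
    ∑' k, eps q k = (1 - q)⁻¹ - 1 := by
  rw [eps_eq, Summable.tsum_sub (summable_geometric_of_lt_one h0 h1) good_del.1,
    tsum_geometric_of_lt_one h0 h1, tsum_del]

lemma Good.mul {α β : Type*} {f : α → ℝ} {g : β → ℝ} (hf : Good f) (hg : Good g) :
    Good (fun x : α × β => f x.1 * g x.2) :=
  ⟨hf.1.mul_of_nonneg hg.1 hf.2 hg.2, fun x => mul_nonneg (hf.2 _) (hg.2 _)⟩

lemma Good.tsum_mul {α β : Type*} {f : α → ℝ} {g : β → ℝ} (hf : Good f) (hg : Good g) :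
    ∑' x : α × β, f x.1 * g x.2 = (∑' a, f a) * (∑' b, g b) := by
  rw [Summable.tsum_prod' (hf.mul hg).1 fun a => (hg.1.mul_left (f a))]
  simp_rw [tsum_mul_left]
  rw [tsum_mul_right]

abbrev T5 := ℕ × ℕ × ℕ × ℕ × ℕ

lemma good5 {f₁ f₂ f₃ f₄ f₅ : ℕ → ℝ} (h₁ : Good f₁) (h₂ : Good f₂) (h₃ : Good f₃)
    (h₄ : Good f₄) (h₅ : Good f₅) :
    Good (fun k : T5 => f₁ k.1 * (f₂ k.2.1 * (f₃ k.2.2.1 * (f₄ k.2.2.2.1 * f₅ k.2.2.2.2)))) :=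
  h₁.mul (h₂.mul (h₃.mul (h₄.mul h₅)))

lemma tsum5 {f₁ f₂ f₃ f₄ f₅ : ℕ → ℝ} (h₁ : Good f₁) (h₂ : Good f₂) (h₃ : Good f₃)
    (h₄ : Good f₄) (h₅ : Good f₅) :
    ∑' k : T5, f₁ k.1 * (f₂ k.2.1 * (f₃ k.2.2.1 * (f₄ k.2.2.2.1 * f₅ k.2.2.2.2))) =
      (∑' n, f₁ n) * ((∑' n, f₂ n) * ((∑' n, f₃ n) * ((∑' n, f₄ n) * (∑' n, f₅ n)))) := by
  have e45 : ∑' x : ℕ × ℕ, f₄ x.1 * f₅ x.2 = (∑' n, f₄ n) * (∑' n, f₅ n) := h₄.tsum_mul h₅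
  have e345 : ∑' x : ℕ × ℕ × ℕ, f₃ x.1 * (f₄ x.2.1 * f₅ x.2.2) =
      (∑' n, f₃ n) * ((∑' n, f₄ n) * (∑' n, f₅ n)) := by
    have h := h₃.tsum_mul (h₄.mul h₅)
    simp only [e45] at h
    exact h
  have e2345 : ∑' x : ℕ × ℕ × ℕ × ℕ, f₂ x.1 * (f₃ x.2.1 * (f₄ x.2.2.1 * f₅ x.2.2.2)) =
      (∑' n, f₂ n) * ((∑' n, f₃ n) * ((∑' n, f₄ n) * (∑' n, f₅ n))) := by
    have h := h₂.tsum_mul (h₃.mul (h₄.mul h₅))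
    simp only [e345] at h
    exact h
  have h := h₁.tsum_mul (h₂.mul (h₃.mul (h₄.mul h₅)))
  simp only [e2345] at h
  exact h

lemma hasSum5 {f₁ f₂ f₃ f₄ f₅ : ℕ → ℝ} (h₁ : Good f₁) (h₂ : Good f₂) (h₃ : Good f₃)
    (h₄ : Good f₄) (h₅ : Good f₅) :
    HasSum (fun k : T5 => f₁ k.1 * (f₂ k.2.1 * (f₃ k.2.2.1 * (f₄ k.2.2.2.1 * f₅ k.2.2.2.2))))
      ((∑' n, f₁ n) * ((∑' n, f₂ n) * ((∑' n, f₃ n) * ((∑' n, f₄ n) * (∑' n, f₅ n))))) := by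
  have h := (good5 h₁ h₂ h₃ h₄ h₅).1.hasSum
  rwa [tsum5 h₁ h₂ h₃ h₄ h₅] at h

set_option maxHeartbeats 1000000 in
lemma key_lemma {p : ℕ} (hp : p.Prime) (a b c d e : ℕ) :
    Theta (p ^ a) (p ^ b) (p ^ c) (p ^ d) (p ^ e) /
        (p : ℝ) ^ (a + b + c + d + e) =
      del a * (del b * (del c * (del d * del e))) +
      (1 - 1/(p:ℝ))^3 / (1 - 1/(p:ℝ)^2) * (eps ((p:ℝ))⁻¹ a * (del b * (del c * (del d * del e)))) +
      (1 - 1/(p:ℝ))^3 / (1 - 1/(p:ℝ)^2) * (del a * (eps ((p:ℝ))⁻¹ b * (del c * (del d * del e)))) +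
      (1 - 1/(p:ℝ))^3 / (1 - 1/(p:ℝ)^2) * (del a * (del b * (eps ((p:ℝ))⁻¹ c * (del d * del e)))) +
      (1 - 1/(p:ℝ))^2 / (1 - 1/(p:ℝ)^2) * (del a * (del b * (del c * (eps ((p:ℝ))⁻¹ d * del e)))) +
      (1 - 1/(p:ℝ))^2 / (1 - 1/(p:ℝ)^2) * (del a * (del b * (del c * (del d * eps ((p:ℝ))⁻¹ e)))) +
      (1 - 1/(p:ℝ))^3 / (1 - 1/(p:ℝ)^2) * (eps ((p:ℝ))⁻¹ a * (eps ((p:ℝ))⁻¹ b * (del c * (del d * del e)))) +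
      (1 - 1/(p:ℝ))^3 / (1 - 1/(p:ℝ)^2) * (eps ((p:ℝ))⁻¹ a * (del b * (del c * (eps ((p:ℝ))⁻¹ d * del e)))) +
      (1 - 1/(p:ℝ))^3 / (1 - 1/(p:ℝ)^2) * (del a * (eps ((p:ℝ))⁻¹ b * (eps ((p:ℝ))⁻¹ c * (del d * del e)))) +
      (1 - 1/(p:ℝ))^3 / (1 - 1/(p:ℝ)^2) * (del a * (del b * (eps ((p:ℝ))⁻¹ c * (del d * eps ((p:ℝ))⁻¹ e)))) := by
  have hp1 : (1 : ℝ) < p := by exact_mod_cast hp.one_lt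
  have hp0 : (p : ℝ) ≠ 0 := by linarith
  have hq1 : ((p:ℝ))⁻¹ < 1 := by rw [inv_lt_one_iff₀]; right; linarith
  have hq2 : (((p:ℝ))⁻¹)^2 < 1 := by nlinarith [inv_nonneg.mpr (le_of_lt (lt_trans one_pos hp1))]
  have hs' : 1 - ((p:ℝ))⁻¹ ≠ 0 := ne_of_gt (by linarith)
  have hd2' : 1 - (((p:ℝ))⁻¹)^2 ≠ 0 := ne_of_gt (by linarith)
  rw [thetaPow hp]
  rcases eq_or_ne a 0 with ha | ha <;> rcases eq_or_ne b 0 with hb | hb <;>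
    rcases eq_or_ne c 0 with hc | hc <;> rcases eq_or_ne d 0 with hd' | hd' <;>
    rcases eq_or_ne e 0 with he | he <;>
    simp [Sf, Df, del, eps, ha, hb, hc, hd', he, Nat.add_eq_zero, one_div] <;>
    simp only [div_eq_mul_inv, ← inv_pow] <;>
    (try (revert hs' hd2'; generalize ((p:ℝ))⁻¹ = u; intro hs' hd2')) <;>
    field_simp <;>
    (try ring) <;>
    (try exact Or.inl trivial)

end Stmt18Aux

open Stmt18Aux in
set_option maxHeartbeats 1000000 in
theorem stmt_18 (p : ℕ) (hp : p.Prime) :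
    ∑' k : ℕ × ℕ × ℕ × ℕ × ℕ,
        Theta (p ^ k.1) (p ^ k.2.1) (p ^ k.2.2.1) (p ^ k.2.2.2.1) (p ^ k.2.2.2.2) /
          (p : ℝ) ^ (k.1 + k.2.1 + k.2.2.1 + k.2.2.2.1 + k.2.2.2.2) =
      (1 - 1 / (p : ℝ) ^ 2)⁻¹ * (1 - 1 / (p : ℝ)) *
        (1 + 6 / (p : ℝ) + 1 / (p : ℝ) ^ 2) := by
  have hp1 : (1 : ℝ) < p := by exact_mod_cast hp.one_lt
  have hp0 : (p : ℝ) ≠ 0 := by linarith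
  have hq0 : 0 ≤ ((p:ℝ))⁻¹ := inv_nonneg.mpr (by linarith)
  have hq1 : ((p:ℝ))⁻¹ < 1 := by rw [inv_lt_one_iff₀]; right; linarith
  have hD : Good del := good_del
  have hE : Good (eps ((p:ℝ))⁻¹) := good_eps hq0 hq1
  have vD : ∑' n, del n = 1 := tsum_del
  have vE : ∑' n, eps ((p:ℝ))⁻¹ n = (1 - ((p:ℝ))⁻¹)⁻¹ - 1 := tsum_eps hq0 hq1
  set A : ℝ := (1 - 1/(p:ℝ))^3 / (1 - 1/(p:ℝ)^2) with hA
  set B : ℝ := (1 - 1/(p:ℝ))^2 / (1 - 1/(p:ℝ)^2) with hB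
  set r : ℝ := (1 - ((p:ℝ))⁻¹)⁻¹ - 1 with hr
  have H0 : HasSum (fun k : T5 =>
      del k.1 * (del k.2.1 * (del k.2.2.1 * (del k.2.2.2.1 * del k.2.2.2.2)))) 1 := by
    have h := hasSum5 hD hD hD hD hD
    rw [vD] at h; simpa using h
  have mk1 : ∀ {f : T5 → ℝ} {v : ℝ}, HasSum f v → ∀ (C : ℝ), HasSum (fun k => C * f k) (C * v) :=
    fun h C => h.mul_left C
  have H1 : HasSum (fun k : T5 =>
      A * (eps ((p:ℝ))⁻¹ k.1 * (del k.2.1 * (del k.2.2.1 * (del k.2.2.2.1 * del k.2.2.2.2))))) (A * r) := by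
    have h := (hasSum5 hE hD hD hD hD).mul_left A
    rw [vD, vE] at h; simpa using h
  have H2 : HasSum (fun k : T5 =>
      A * (del k.1 * (eps ((p:ℝ))⁻¹ k.2.1 * (del k.2.2.1 * (del k.2.2.2.1 * del k.2.2.2.2))))) (A * r) := by
    have h := (hasSum5 hD hE hD hD hD).mul_left A
    rw [vD, vE] at h; simpa using h
  have H3 : HasSum (fun k : T5 =>
      A * (del k.1 * (del k.2.1 * (eps ((p:ℝ))⁻¹ k.2.2.1 * (del k.2.2.2.1 * del k.2.2.2.2))))) (A * r) := by
    have h := (hasSum5 hD hD hE hD hD).mul_left A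
    rw [vD, vE] at h; simpa using h
  have H4 : HasSum (fun k : T5 =>
      B * (del k.1 * (del k.2.1 * (del k.2.2.1 * (eps ((p:ℝ))⁻¹ k.2.2.2.1 * del k.2.2.2.2))))) (B * r) := by
    have h := (hasSum5 hD hD hD hE hD).mul_left B
    rw [vD, vE] at h; simpa using h
  have H5 : HasSum (fun k : T5 =>
      B * (del k.1 * (del k.2.1 * (del k.2.2.1 * (del k.2.2.2.1 * eps ((p:ℝ))⁻¹ k.2.2.2.2))))) (B * r) := by
    have h := (hasSum5 hD hD hD hD hE).mul_left B
    rw [vD, vE] at h; simpa using h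
  have H6 : HasSum (fun k : T5 =>
      A * (eps ((p:ℝ))⁻¹ k.1 * (eps ((p:ℝ))⁻¹ k.2.1 * (del k.2.2.1 * (del k.2.2.2.1 * del k.2.2.2.2))))) (A * (r * r)) := by
    have h := (hasSum5 hE hE hD hD hD).mul_left A
    rw [vD, vE] at h; simpa [mul_assoc] using h
  have H7 : HasSum (fun k : T5 =>
      A * (eps ((p:ℝ))⁻¹ k.1 * (del k.2.1 * (del k.2.2.1 * (eps ((p:ℝ))⁻¹ k.2.2.2.1 * del k.2.2.2.2))))) (A * (r * r)) := by
    have h := (hasSum5 hE hD hD hE hD).mul_left A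
    rw [vD, vE] at h; simpa [mul_assoc] using h
  have H8 : HasSum (fun k : T5 =>
      A * (del k.1 * (eps ((p:ℝ))⁻¹ k.2.1 * (eps ((p:ℝ))⁻¹ k.2.2.1 * (del k.2.2.2.1 * del k.2.2.2.2))))) (A * (r * r)) := by
    have h := (hasSum5 hD hE hE hD hD).mul_left A
    rw [vD, vE] at h; simpa [mul_assoc] using h
  have H9 : HasSum (fun k : T5 =>
      A * (del k.1 * (del k.2.1 * (eps ((p:ℝ))⁻¹ k.2.2.1 * (del k.2.2.2.1 * eps ((p:ℝ))⁻¹ k.2.2.2.2))))) (A * (r * r)) := by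
    have h := (hasSum5 hD hD hE hD hE).mul_left A
    rw [vD, vE] at h; simpa [mul_assoc] using h
  have Htot : HasSum (fun k : T5 =>
      del k.1 * (del k.2.1 * (del k.2.2.1 * (del k.2.2.2.1 * del k.2.2.2.2))) +
      A * (eps ((p:ℝ))⁻¹ k.1 * (del k.2.1 * (del k.2.2.1 * (del k.2.2.2.1 * del k.2.2.2.2)))) +
      A * (del k.1 * (eps ((p:ℝ))⁻¹ k.2.1 * (del k.2.2.1 * (del k.2.2.2.1 * del k.2.2.2.2)))) +
      A * (del k.1 * (del k.2.1 * (eps ((p:ℝ))⁻¹ k.2.2.1 * (del k.2.2.2.1 * del k.2.2.2.2)))) +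
      B * (del k.1 * (del k.2.1 * (del k.2.2.1 * (eps ((p:ℝ))⁻¹ k.2.2.2.1 * del k.2.2.2.2)))) +
      B * (del k.1 * (del k.2.1 * (del k.2.2.1 * (del k.2.2.2.1 * eps ((p:ℝ))⁻¹ k.2.2.2.2)))) +
      A * (eps ((p:ℝ))⁻¹ k.1 * (eps ((p:ℝ))⁻¹ k.2.1 * (del k.2.2.1 * (del k.2.2.2.1 * del k.2.2.2.2)))) +
      A * (eps ((p:ℝ))⁻¹ k.1 * (del k.2.1 * (del k.2.2.1 * (eps ((p:ℝ))⁻¹ k.2.2.2.1 * del k.2.2.2.2)))) +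
      A * (del k.1 * (eps ((p:ℝ))⁻¹ k.2.1 * (eps ((p:ℝ))⁻¹ k.2.2.1 * (del k.2.2.2.1 * del k.2.2.2.2)))) +
      A * (del k.1 * (del k.2.1 * (eps ((p:ℝ))⁻¹ k.2.2.1 * (del k.2.2.2.1 * eps ((p:ℝ))⁻¹ k.2.2.2.2)))))
      (1 + A * r + A * r + A * r + B * r + B * r + A * (r * r) + A * (r * r) + A * (r * r) + A * (r * r)) :=
    (((((((((H0.add H1).add H2).add H3).add H4).add H5).add H6).add H7).add H8).add H9)
  have key : ∀ k : ℕ × ℕ × ℕ × ℕ × ℕ,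
      Theta (p ^ k.1) (p ^ k.2.1) (p ^ k.2.2.1) (p ^ k.2.2.2.1) (p ^ k.2.2.2.2) /
          (p : ℝ) ^ (k.1 + k.2.1 + k.2.2.1 + k.2.2.2.1 + k.2.2.2.2) =
      del k.1 * (del k.2.1 * (del k.2.2.1 * (del k.2.2.2.1 * del k.2.2.2.2))) +
      A * (eps ((p:ℝ))⁻¹ k.1 * (del k.2.1 * (del k.2.2.1 * (del k.2.2.2.1 * del k.2.2.2.2)))) +
      A * (del k.1 * (eps ((p:ℝ))⁻¹ k.2.1 * (del k.2.2.1 * (del k.2.2.2.1 * del k.2.2.2.2)))) +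
      A * (del k.1 * (del k.2.1 * (eps ((p:ℝ))⁻¹ k.2.2.1 * (del k.2.2.2.1 * del k.2.2.2.2)))) +
      B * (del k.1 * (del k.2.1 * (del k.2.2.1 * (eps ((p:ℝ))⁻¹ k.2.2.2.1 * del k.2.2.2.2)))) +
      B * (del k.1 * (del k.2.1 * (del k.2.2.1 * (del k.2.2.2.1 * eps ((p:ℝ))⁻¹ k.2.2.2.2)))) +
      A * (eps ((p:ℝ))⁻¹ k.1 * (eps ((p:ℝ))⁻¹ k.2.1 * (del k.2.2.1 * (del k.2.2.2.1 * del k.2.2.2.2)))) +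
      A * (eps ((p:ℝ))⁻¹ k.1 * (del k.2.1 * (del k.2.2.1 * (eps ((p:ℝ))⁻¹ k.2.2.2.1 * del k.2.2.2.2)))) +
      A * (del k.1 * (eps ((p:ℝ))⁻¹ k.2.1 * (eps ((p:ℝ))⁻¹ k.2.2.1 * (del k.2.2.2.1 * del k.2.2.2.2)))) +
      A * (del k.1 * (del k.2.1 * (eps ((p:ℝ))⁻¹ k.2.2.1 * (del k.2.2.2.1 * eps ((p:ℝ))⁻¹ k.2.2.2.2)))) := by
    rintro ⟨a, b, c, d, e⟩
    exact key_lemma hp a b c d e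
  rw [tsum_congr key, Htot.tsum_eq, hA, hB, hr]
  have hq2 : (((p:ℝ))⁻¹)^2 < 1 := by nlinarith
  have hu1 : 1 - ((p:ℝ))⁻¹ ≠ 0 := ne_of_gt (by linarith)
  have hu2 : 1 - (((p:ℝ))⁻¹)^2 ≠ 0 := ne_of_gt (by linarith)
  simp only [one_div, div_eq_mul_inv, ← inv_pow]
  revert hu1 hu2
  generalize ((p:ℝ))⁻¹ = u
  intro hu1 hu2
  field_simp
  ring
end
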